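/- arXiv:2007.07781 — 4 statements merged into one kernel-verified Lean document; each statement's English description precedes it below -/
import Mathlib

section
/- Let (U_i, V_i), i = 1,…,n, be i.i.d. real random pairs with finite fourth moments, independent of a random sampling-with-replacement sketch Π with probabilities p_i. Then E[n^{−1}(UᵀΠᵀΠV − UᵀV)] = 0 and Var[n^{−1}(UᵀΠᵀΠV − UᵀV)] = {1/m − 1/n + (1 − 1/m) Σ_{i=1}^n p_i²} · Var(U₁V₁). -/
open MeasureTheory ProbabilityTheory Matrix

private lemma ennreal_half : (1:ENNReal)/2 = 1/4 + 1/4 := by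
  rw [ENNReal.div_add_div_same, one_add_one_eq_two, one_div,
    ENNReal.eq_div_iff (by norm_num) (by norm_num),
    show (4:ENNReal) = 2*2 by norm_num, mul_assoc,
    ENNReal.mul_inv_cancel (by norm_num) (by norm_num), mul_one]

private lemma ennreal_one : (1:ENNReal)/1 = 1/2 + 1/2 := by
  rw [ENNReal.div_add_div_same, one_add_one_eq_two, one_div, inv_one,
    ENNReal.eq_div_iff (by norm_num) (by norm_num)]
  simp

/-- **Mean and variance of the sketching error under random sampling with
replacement.**  `(U_i, V_i)` are i.i.d. pairs with finite fourth moments,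
independent of the sketch `Π = √(n/m)(ι_{k₁},…,ι_{k_m})ᵀ` whose i.i.d. row
indices have `P(k_t = i) = p_i`.  Then `E[n⁻¹(UᵀΠᵀΠV − UᵀV)] = 0` and
`Var[n⁻¹(UᵀΠᵀΠV − UᵀV)] = {1/m − 1/n + (1 − 1/m) Σ_i p_i²} · Var(U₁V₁)`. -/
theorem rs_sketching_error_moments
    {Ω : Type*} [MeasurableSpace Ω] (μ : Measure Ω) [IsProbabilityMeasure μ]
    (m n : ℕ) (hm : 0 < m) [NeZero n]
    (idx : Fin m → Ω → Fin n) (hidx_meas : ∀ t, Measurable (idx t))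
    (p : Fin n → ℝ)
    (hp : ∀ t i, (μ {ω | idx t ω = i}).toReal = p i)
    (hiid : ∀ t t', t ≠ t' → IndepFun (idx t) (idx t') μ)
    (U V : Fin n → Ω → ℝ)
    (hU_meas : ∀ i, Measurable (U i)) (hV_meas : ∀ i, Measurable (V i))
    (hUV_indep : iIndepFun (fun i ω => (U i ω, V i ω)) μ)
    (hUV_ident : ∀ i, IdentDistrib (fun ω => (U i ω, V i ω))
      (fun ω => (U 0 ω, V 0 ω)) μ μ)
    (hU4 : ∀ i, MemLp (U i) 4 μ) (hV4 : ∀ i, MemLp (V i) 4 μ)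
    (hindep_data : IndepFun (fun ω (t : Fin m) => idx t ω)
      (fun ω (i : Fin n) => (U i ω, V i ω)) μ)
    (Pm : Ω → Matrix (Fin m) (Fin n) ℝ)
    (hPm : ∀ ω t i, Pm ω t i = if idx t ω = i then Real.sqrt ((n : ℝ) / m) else 0)
    (T : Ω → ℝ)
    (hT : ∀ ω, T ω = (n : ℝ)⁻¹ *
      ((Pm ω *ᵥ fun i => U i ω) ⬝ᵥ (Pm ω *ᵥ fun i => V i ω)
        - (fun i => U i ω) ⬝ᵥ (fun i => V i ω))) :
    (∫ ω, T ω ∂μ) = 0 ∧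
    variance T μ =
      (1 / m - 1 / n + (1 - 1 / m) * ∑ i, (p i) ^ 2) *
        variance (fun ω => U 0 ω * V 0 ω) μ := by
  classical
  have hnR : ((n:ℝ)) ≠ 0 := Nat.cast_ne_zero.2 (NeZero.ne n)
  have hmR : ((m:ℝ)) ≠ 0 := Nat.cast_ne_zero.2 hm.ne'
  set W : Fin n → Ω → ℝ := fun i ω => U i ω * V i ω with hW_def
  set X : Fin m → Fin n → Ω → ℝ := fun t i ω => if idx t ω = i then (1:ℝ) else 0 with hX_def
  set c : Fin n → Ω → ℝ := fun i ω => (m:ℝ)⁻¹ * ∑ t, X t i ω - (n:ℝ)⁻¹ with hc_def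
  -- measurability
  have hXmeas : ∀ t i, Measurable (X t i) := fun t i =>
    Measurable.ite (hidx_meas t (measurableSet_singleton i)) measurable_const measurable_const
  have hcmeas : ∀ i, Measurable (c i) := fun i =>
    ((Finset.measurable_sum _ fun t _ => hXmeas t i).const_mul _).sub measurable_const
  have hWmeas : ∀ i, Measurable (W i) := fun i => (hU_meas i).mul (hV_meas i)
  -- generic integrability of bounded measurable functions
  have hbd_int : ∀ (f : Ω → ℝ), Measurable f → ∀ C : ℝ, (∀ ω, |f ω| ≤ C) → Integrable f μ :=
    fun f hf C h => (integrable_const C).mono' hf.aestronglyMeasurable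
      (Filter.Eventually.of_forall (by simpa using h))
  -- basic indicator facts
  have hX01 : ∀ t i ω, 0 ≤ X t i ω ∧ X t i ω ≤ 1 := by
    intro t i ω; dsimp [X]; split <;> norm_num
  have hXsum : ∀ t ω, ∑ i, X t i ω = 1 := by
    intro t ω; simp [X]
  have hcsum : ∀ ω, ∑ i, c i ω = 0 := by
    intro ω
    simp only [hc_def, Finset.sum_sub_distrib, ← Finset.mul_sum]
    rw [Finset.sum_comm]
    simp only [hXsum, Finset.sum_const, Finset.card_univ, Fintype.card_fin, nsmul_eq_mul,
      mul_one]
    rw [mul_comm, mul_inv_cancel₀ hmR]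
    simp [Finset.card_univ, mul_comm, inv_mul_cancel₀ hnR]
  have hcbd : ∀ i ω, |c i ω| ≤ 1 := by
    intro i ω
    have h1 : 0 ≤ ∑ t, X t i ω := Finset.sum_nonneg fun t _ => (hX01 t i ω).1
    have h2 : ∑ t, X t i ω ≤ m := by
      calc ∑ t, X t i ω ≤ ∑ _t : Fin m, (1:ℝ) := Finset.sum_le_sum fun t _ => (hX01 t i ω).2
      _ = m := by simp
    have h3 : 0 ≤ (m:ℝ)⁻¹ * ∑ t, X t i ω := by positivity
    have h4 : (m:ℝ)⁻¹ * ∑ t, X t i ω ≤ 1 := by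
      rw [inv_mul_le_iff₀ (by positivity), mul_one]; exact h2
    have h5 : 0 ≤ ((n:ℝ))⁻¹ := by positivity
    have h6 : ((n:ℝ))⁻¹ ≤ 1 := by
      rw [inv_le_one_iff₀]; right; exact_mod_cast Nat.one_le_iff_ne_zero.2 (NeZero.ne n)
    rw [hc_def, abs_le]; constructor <;> simp only <;> nlinarith
  -- the key pointwise decomposition
  have h_T : ∀ ω, T ω = ∑ i, c i ω * W i ω := by
    intro ω
    show T ω = ∑ i, ((m:ℝ)⁻¹ * ∑ t, (if idx t ω = i then (1:ℝ) else 0) - (n:ℝ)⁻¹)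
      * (U i ω * V i ω)
    have hsq : Real.sqrt ((n:ℝ)/m) * Real.sqrt ((n:ℝ)/m) = (n:ℝ)/m :=
      Real.mul_self_sqrt (div_nonneg (Nat.cast_nonneg n) (Nat.cast_nonneg m))
    have hrow : ∀ (f : Fin n → Ω → ℝ) t, (Pm ω *ᵥ fun i => f i ω) t
        = Real.sqrt ((n:ℝ)/m) * f (idx t ω) ω := by
      intro f t
      simp [mulVec, dotProduct, hPm, ite_mul, Finset.sum_ite_eq]
    rw [hT ω]
    simp only [dotProduct, hrow]
    have hterm : ∀ t, (Real.sqrt ((n:ℝ)/m) * U (idx t ω) ω) *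
        (Real.sqrt ((n:ℝ)/m) * V (idx t ω) ω)
        = ((n:ℝ)/m) * ∑ i, (if idx t ω = i then (1:ℝ) else 0) * (U i ω * V i ω) := by
      intro t
      rw [mul_mul_mul_comm, hsq, show ∑ i, (if idx t ω = i then (1:ℝ) else 0) * (U i ω * V i ω)
          = U (idx t ω) ω * V (idx t ω) ω from by
        simp [ite_mul, Finset.sum_ite_eq]]
    simp only [hterm, ← Finset.mul_sum]
    have hRHS : ∑ i, ((m:ℝ)⁻¹ * ∑ t, (if idx t ω = i then (1:ℝ) else 0) - (n:ℝ)⁻¹)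
        * (U i ω * V i ω)
        = (m:ℝ)⁻¹ * (∑ t, ∑ i, (if idx t ω = i then (1:ℝ) else 0) * (U i ω * V i ω))
          - (n:ℝ)⁻¹ * ∑ i, U i ω * V i ω := by
      rw [Finset.sum_comm]
      simp only [sub_mul, Finset.sum_sub_distrib, Finset.mul_sum, Finset.sum_mul, mul_assoc]
    rw [hRHS, mul_sub]
    congr 1
    rw [← mul_assoc]
    congr 1
    field_simp
  -- moments of W
  have hW2 : ∀ i, MemLp (W i) 2 μ := by
    intro i
    have := (hV4 i).smul (hU4 i) (r := 2) (hpqr := ⟨by simpa [one_div] using ennreal_half.symm⟩)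
    exact this
  have hW_int : ∀ i, Integrable (W i) μ := fun i => (hW2 i).integrable one_le_two
  have hWW_int : ∀ i j, Integrable (fun ω => W i ω * W j ω) μ := by
    intro i j
    have := (hW2 j).smul (hW2 i) (r := 1) (hpqr := ⟨by simpa [one_div] using ennreal_one.symm⟩)
    rw [← memLp_one_iff_integrable]
    exact this
  set a : ℝ := ∫ ω, W 0 ω ∂μ with ha_def
  set b : ℝ := ∫ ω, (W 0 ω)^2 ∂μ with hb_def
  have hEW : ∀ i, ∫ ω, W i ω ∂μ = a := by
    intro i
    exact ((hUV_ident i).comp (measurable_fst.mul measurable_snd)).integral_eq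
  have hEW2 : ∀ i, ∫ ω, (W i ω)^2 ∂μ = b := by
    intro i
    exact ((hUV_ident i).comp ((measurable_fst.mul measurable_snd).pow_const 2)).integral_eq
  have hEWmul : ∀ i j, i ≠ j → ∫ ω, W i ω * W j ω ∂μ = a * a := by
    intro i j hij
    have hind : IndepFun (W i) (W j) μ :=
      (hUV_indep.indepFun hij).comp (measurable_fst.mul measurable_snd)
        (measurable_fst.mul measurable_snd)
    have := hind.integral_mul_eq_mul_integral (hWmeas i).aestronglyMeasurable (hWmeas j).aestronglyMeasurable
    rw [hEW i, hEW j] at this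
    exact this
  -- expectations of indicators
  have hEX : ∀ t i, ∫ ω, X t i ω ∂μ = p i := by
    intro t i
    rw [show ∫ ω, X t i ω ∂μ
        = ∫ ω, Set.indicator {ω | idx t ω = i} (fun _ => (1:ℝ)) ω ∂μ from
        integral_congr_ae (Filter.Eventually.of_forall fun ω => by
          simp [X, Set.indicator_apply]),
      integral_indicator_const _
        (show MeasurableSet {ω | idx t ω = i} from
          hidx_meas t (measurableSet_singleton i))]
    simp [Measure.real, hp t i]
  have hpsum : ∑ i, p i = 1 := by
    have t0 : Fin m := ⟨0, hm⟩
    calc ∑ i, p i = ∑ i, ∫ ω, X t0 i ω ∂μ := by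
          refine Finset.sum_congr rfl fun i _ => (hEX t0 i).symm
      _ = ∫ ω, ∑ i, X t0 i ω ∂μ :=
          (integral_finset_sum _ fun i _ => hbd_int _ (hXmeas t0 i) 1
            (fun ω => abs_le.2 ⟨by linarith [(hX01 t0 i ω).1], (hX01 t0 i ω).2⟩)).symm
      _ = 1 := by simp [hXsum]
  have hEXX : ∀ t t' i, ∫ ω, X t i ω * X t' i ω ∂μ = if t = t' then p i else p i * p i := by
    intro t t' i
    by_cases h : t = t'
    · subst h
      simp only [if_pos rfl]
      rw [show ∫ ω, X t i ω * X t i ω ∂μ = ∫ ω, X t i ω ∂μ from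
        integral_congr_ae (Filter.Eventually.of_forall fun ω => by
          dsimp [X]; split <;> norm_num)]
      exact hEX t i
    · simp only [if_neg h]
      have hind : IndepFun (X t i) (X t' i) μ :=
        (hiid t t' h).comp (φ := fun k : Fin n => if k = i then (1:ℝ) else 0)
          (ψ := fun k : Fin n => if k = i then (1:ℝ) else 0)
          (measurable_of_countable _) (measurable_of_countable _)
      have := hind.integral_mul_eq_mul_integral (hXmeas t i).aestronglyMeasurable
        (hXmeas t' i).aestronglyMeasurable
      rw [hEX t i, hEX t' i] at this
      exact this
  -- expectation of c i
  have hX_int : ∀ t i, Integrable (X t i) μ := fun t i => hbd_int _ (hXmeas t i) 1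
    (fun ω => abs_le.2 ⟨by linarith [(hX01 t i ω).1], (hX01 t i ω).2⟩)
  have hS_int : ∀ i, Integrable (fun ω => ∑ t, X t i ω) μ := fun i =>
    integrable_finset_sum _ fun t _ => hX_int t i
  have hES : ∀ i, ∫ ω, ∑ t, X t i ω ∂μ = m * p i := by
    intro i
    rw [integral_finset_sum _ fun t _ => hX_int t i]
    simp [hEX]
  have hEc : ∀ i, ∫ ω, c i ω ∂μ = p i - (n:ℝ)⁻¹ := by
    intro i
    rw [hc_def]
    simp only
    rw [integral_sub ((hS_int i).const_mul _) (integrable_const _),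
      integral_const_mul, hES i, integral_const]
    simp [measure_univ, ← mul_assoc, inv_mul_cancel₀ hmR]
  -- expectation of c i ^ 2
  have hEcc : ∀ i, ∫ ω, c i ω * c i ω ∂μ
      = p i * (m:ℝ)⁻¹ + (1 - (m:ℝ)⁻¹) * (p i * p i)
        - 2 * ((n:ℝ)⁻¹ * p i) + (n:ℝ)⁻¹ * (n:ℝ)⁻¹ := by
    intro i
    have hXX_int : ∀ t t', Integrable (fun ω => X t i ω * X t' i ω) μ := by
      intro t t'
      refine hbd_int _ ((hXmeas t i).mul (hXmeas t' i)) 1 fun ω => ?_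
      have h1 := hX01 t i ω; have h2 := hX01 t' i ω
      rw [abs_mul, abs_of_nonneg h1.1, abs_of_nonneg h2.1]
      nlinarith
    have hciden : ∀ ω, c i ω * c i ω
        = (m:ℝ)⁻¹*(m:ℝ)⁻¹ * ∑ t, ∑ t', X t i ω * X t' i ω
          - 2*((m:ℝ)⁻¹*(n:ℝ)⁻¹) * ∑ t, X t i ω + (n:ℝ)⁻¹*(n:ℝ)⁻¹ := by
      intro ω
      rw [← Finset.sum_mul_sum]
      rw [hc_def]
      ring
    rw [integral_congr_ae (Filter.Eventually.of_forall hciden)]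
    have hdd_int : Integrable (fun ω => ∑ t, ∑ t', X t i ω * X t' i ω) μ :=
      integrable_finset_sum _ fun t _ => integrable_finset_sum _ fun t' _ => hXX_int t t'
    have hint1 : Integrable (fun ω => (m:ℝ)⁻¹*(m:ℝ)⁻¹ * ∑ t, ∑ t', X t i ω * X t' i ω
        - 2*((m:ℝ)⁻¹*(n:ℝ)⁻¹) * ∑ t, X t i ω) μ :=
      (hdd_int.const_mul _).sub ((hS_int i).const_mul _)
    have hint2 : Integrable (fun ω => (m:ℝ)⁻¹*(m:ℝ)⁻¹ * ∑ t, ∑ t', X t i ω * X t' i ω) μ :=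
      hdd_int.const_mul _
    have hint3 : Integrable (fun ω => 2*((m:ℝ)⁻¹*(n:ℝ)⁻¹) * ∑ t, X t i ω) μ :=
      (hS_int i).const_mul _
    rw [integral_add hint1 (integrable_const _), integral_sub hint2 hint3,
      integral_const_mul, integral_const_mul, hES i, integral_const]
    have hdd : ∫ ω, ∑ t, ∑ t', X t i ω * X t' i ω ∂μ
        = m * ((p i - p i * p i) + m * (p i * p i)) := by
      rw [integral_finset_sum _ fun t _ => integrable_finset_sum _ fun t' _ => hXX_int t t',
        Finset.sum_congr rfl fun t _ => integral_finset_sum _ fun t' _ => hXX_int t t']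
      have hinner : ∀ t : Fin m, ∑ t', ∫ ω, X t i ω * X t' i ω ∂μ
          = (p i - p i * p i) + m * (p i * p i) := by
        intro t
        rw [Finset.sum_congr rfl fun t' _ => (hEXX t t' i)]
        rw [Finset.sum_congr rfl fun t' (_ : t' ∈ Finset.univ) =>
          (show (if t = t' then p i else p i * p i)
            = p i * p i + (if t = t' then p i - p i * p i else 0) from by split <;> ring)]
        rw [Finset.sum_add_distrib, Finset.sum_const, Finset.sum_ite_eq]
        simp [Finset.card_univ]
        ring
      rw [Finset.sum_congr rfl fun t _ => hinner t]
      simp [Finset.card_univ]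
      ring
    rw [hdd]
    simp only [measure_univ, probReal_univ, ENNReal.toReal_one, smul_eq_mul, one_mul]
    field_simp
    ring
  -- independence: functions of c versus functions of W
  have hindep_cW : ∀ i, IndepFun (c i) (W i) μ := by
    intro i
    exact hindep_data.comp
      (φ := fun k : Fin m → Fin n => (m:ℝ)⁻¹ * ∑ t, (if k t = i then (1:ℝ) else 0) - (n:ℝ)⁻¹)
      (ψ := fun x : Fin n → ℝ × ℝ => (x i).1 * (x i).2)
      (measurable_of_countable _) (by fun_prop)
  have hindep_ccWW : ∀ i j, IndepFun (fun ω => c i ω * c j ω) (fun ω => W i ω * W j ω) μ := by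
    intro i j
    exact hindep_data.comp
      (φ := fun k : Fin m → Fin n =>
        ((m:ℝ)⁻¹ * ∑ t, (if k t = i then (1:ℝ) else 0) - (n:ℝ)⁻¹) *
        ((m:ℝ)⁻¹ * ∑ t, (if k t = j then (1:ℝ) else 0) - (n:ℝ)⁻¹))
      (ψ := fun x : Fin n → ℝ × ℝ => (x i).1 * (x i).2 * ((x j).1 * (x j).2))
      (measurable_of_countable _) (by fun_prop)
  -- term integrability
  have hcW_int : ∀ i, Integrable (fun ω => c i ω * W i ω) μ := by
    intro i
    refine ((hW_int i).abs.mono' ((hcmeas i).mul (hWmeas i)).aestronglyMeasurable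
      (Filter.Eventually.of_forall fun ω => ?_))
    rw [Real.norm_eq_abs, abs_mul]
    calc |c i ω| * |W i ω| ≤ 1 * |W i ω| :=
          mul_le_mul_of_nonneg_right (hcbd i ω) (abs_nonneg _)
      _ = |W i ω| := one_mul _
  have hccWW_int : ∀ i j, Integrable (fun ω => c i ω * c j ω * (W i ω * W j ω)) μ := by
    intro i j
    refine ((hWW_int i j).abs.mono'
      (((hcmeas i).mul (hcmeas j)).mul ((hWmeas i).mul (hWmeas j))).aestronglyMeasurable
      (Filter.Eventually.of_forall fun ω => ?_))
    rw [Real.norm_eq_abs, abs_mul, abs_mul (c i ω)]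
    calc |c i ω| * |c j ω| * |W i ω * W j ω| ≤ 1 * 1 * |W i ω * W j ω| := by
          refine mul_le_mul (mul_le_mul (hcbd i ω) (hcbd j ω) (abs_nonneg _) zero_le_one)
            le_rfl (abs_nonneg _) (by norm_num)
      _ = |W i ω * W j ω| := by ring
  -- factorizations
  have hfac1 : ∀ i, ∫ ω, c i ω * W i ω ∂μ = (∫ ω, c i ω ∂μ) * ∫ ω, W i ω ∂μ := by
    intro i
    exact (hindep_cW i).integral_mul_eq_mul_integral (hcmeas i).aestronglyMeasurable
      (hWmeas i).aestronglyMeasurable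
  have hfac2 : ∀ i j, ∫ ω, c i ω * c j ω * (W i ω * W j ω) ∂μ
      = (∫ ω, c i ω * c j ω ∂μ) * ∫ ω, W i ω * W j ω ∂μ := by
    intro i j
    exact (hindep_ccWW i j).integral_mul_eq_mul_integral ((hcmeas i).mul (hcmeas j)).aestronglyMeasurable
      ((hWmeas i).mul (hWmeas j)).aestronglyMeasurable
  -- the mean is zero
  have hmean : (∫ ω, T ω ∂μ) = 0 := by
    rw [show (∫ ω, T ω ∂μ) = ∫ ω, ∑ i, c i ω * W i ω ∂μ from
        integral_congr_ae (Filter.Eventually.of_forall h_T),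
      integral_finset_sum _ fun i _ => hcW_int i]
    rw [Finset.sum_congr rfl fun i _ => (hfac1 i).trans (by rw [hEc i, hEW i])]
    rw [← Finset.sum_mul, Finset.sum_sub_distrib, hpsum]
    simp [Finset.card_univ, mul_comm, inv_mul_cancel₀ hnR]
  refine ⟨hmean, ?_⟩
  -- L² membership of T
  have hT2 : MemLp T 2 μ := by
    have h1 : MemLp (fun ω => ∑ i, c i ω * W i ω) 2 μ :=
      memLp_finset_sum _ fun i _ => (hW2 i).of_le
        ((hcmeas i).mul (hWmeas i)).aestronglyMeasurable
        (Filter.Eventually.of_forall fun ω => by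
          rw [Real.norm_eq_abs, Real.norm_eq_abs, abs_mul]
          calc |c i ω| * |W i ω| ≤ 1 * |W i ω| :=
                mul_le_mul_of_nonneg_right (hcbd i ω) (abs_nonneg _)
            _ = |W i ω| := one_mul _)
    exact h1.ae_eq (Filter.Eventually.of_forall fun ω => (h_T ω).symm)
  -- integrability of products of c's
  have hcc_int : ∀ i j, Integrable (fun ω => c i ω * c j ω) μ := by
    intro i j
    refine hbd_int _ ((hcmeas i).mul (hcmeas j)) 1 fun ω => ?_
    rw [abs_mul]
    calc |c i ω| * |c j ω| ≤ 1 * 1 :=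
          mul_le_mul (hcbd i ω) (hcbd j ω) (abs_nonneg _) zero_le_one
      _ = 1 := one_mul _
  -- the row sums of second moments of c vanish
  have hce0 : ∀ i, ∑ j, ∫ ω, c i ω * c j ω ∂μ = 0 := by
    intro i
    rw [← integral_finset_sum _ fun j _ => hcc_int i j]
    rw [show ∫ ω, ∑ j, c i ω * c j ω ∂μ = ∫ (_ : Ω), (0:ℝ) ∂μ from
      integral_congr_ae (Filter.Eventually.of_forall fun ω => by
        show ∑ j, c i ω * c j ω = (0:ℝ)
        rw [← Finset.mul_sum, hcsum ω, mul_zero])]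
    simp
  -- values of second moments of W
  have hEWW : ∀ i j, ∫ ω, W i ω * W j ω ∂μ
      = a * a + (if i = j then b - a * a else 0) := by
    intro i j
    by_cases h : i = j
    · subst h
      rw [if_pos rfl, show ∫ ω, W i ω * W i ω ∂μ = ∫ ω, (W i ω)^2 ∂μ from
        integral_congr_ae (Filter.Eventually.of_forall fun ω => (pow_two (W i ω)).symm), hEW2 i]
      ring
    · rw [if_neg h, hEWmul i j h, add_zero]
  -- second moment of T
  have hET2 : ∫ ω, (T ω)^2 ∂μ
      = (∑ i, ∫ ω, c i ω * c i ω ∂μ) * (b - a * a) := by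
    have hptwise : ∀ ω, (T ω)^2 = ∑ i, ∑ j, c i ω * c j ω * (W i ω * W j ω) := by
      intro ω
      rw [h_T ω, sq, Finset.sum_mul_sum]
      exact Finset.sum_congr rfl fun i _ => Finset.sum_congr rfl fun j _ => by ring
    rw [integral_congr_ae (Filter.Eventually.of_forall hptwise),
      integral_finset_sum _ fun i _ => integrable_finset_sum _ fun j _ => hccWW_int i j,
      Finset.sum_congr rfl fun i _ => integral_finset_sum _ fun j _ => hccWW_int i j,
      Finset.sum_congr rfl fun i (_ : i ∈ Finset.univ) =>
        Finset.sum_congr rfl fun j _ => (hfac2 i j).trans (by rw [hEWW i j])]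
    rw [Finset.sum_congr rfl fun i (_ : i ∈ Finset.univ) => show
        ∑ j, (∫ ω, c i ω * c j ω ∂μ) * (a * a + if i = j then b - a * a else 0)
        = (a * a) * ∑ j, (∫ ω, c i ω * c j ω ∂μ)
          + (∫ ω, c i ω * c i ω ∂μ) * (b - a * a) from by
      rw [Finset.sum_congr rfl fun j (_ : j ∈ Finset.univ) => show
          (∫ ω, c i ω * c j ω ∂μ) * (a * a + if i = j then b - a * a else 0)
          = (a * a) * (∫ ω, c i ω * c j ω ∂μ)
            + (if i = j then (∫ ω, c i ω * c j ω ∂μ) * (b - a * a) else 0) from by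
        split <;> ring]
      rw [Finset.sum_add_distrib, ← Finset.mul_sum, Finset.sum_ite_eq]
      simp]
    rw [Finset.sum_congr rfl fun i (_ : i ∈ Finset.univ) => by rw [hce0 i, mul_zero, zero_add]]
    rw [← Finset.sum_mul]
  -- the sum of diagonal second moments of c
  have hsum_cc : ∑ i, ∫ ω, c i ω * c i ω ∂μ
      = 1 / m - 1 / n + (1 - 1 / m) * ∑ i, (p i)^2 := by
    rw [Finset.sum_congr rfl fun i _ => hEcc i]
    simp only [Finset.sum_add_distrib, Finset.sum_sub_distrib, ← Finset.mul_sum,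
      ← Finset.sum_mul, Finset.sum_const, Finset.card_univ, Fintype.card_fin, nsmul_eq_mul,
      hpsum]
    rw [show ∑ i, p i * p i = ∑ i, (p i)^2 from Finset.sum_congr rfl fun i _ => (sq (p i)).symm]
    field_simp
    ring
  -- conclude
  rw [variance_eq_sub hT2, variance_eq_sub (hW2 0)]
  have e1 : μ[T ^ 2] = ∫ ω, (T ω)^2 ∂μ := rfl
  have e2 : μ[T] = ∫ ω, T ω ∂μ := rfl
  have e3 : μ[(W 0) ^ 2] = ∫ ω, (W 0 ω)^2 ∂μ := rfl
  have e4 : μ[W 0] = ∫ ω, W 0 ω ∂μ := rfl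
  rw [e1, e2, e3, e4, hET2, hsum_cc, hmean, ← ha_def, ← hb_def]
  ring
end

section
/- Under uniform sampling with replacement (p_i = 1/n for all i), Var[n^{−1}(UᵀΠᵀΠV − UᵀV)] = ((n−1)/n) · (1/m) · Var(U₁V₁). -/
open MeasureTheory ProbabilityTheory Matrix
open scoped ENNReal

lemma aux_half : (2:ℝ≥0∞)⁻¹ = 4⁻¹ + 4⁻¹ := by
  rw [show (4:ℝ≥0∞) = 2*2 by norm_num, ENNReal.mul_inv (by norm_num) (by norm_num),
    ← mul_add, ENNReal.inv_two_add_inv_two, mul_one]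

lemma aux_sum_ite_const {k : ℕ} (a : Fin k) (c d : ℝ) :
    (∑ x : Fin k, if a = x then c else d) = c + ((k:ℝ) - 1) * d := by
  have h : ∀ x : Fin k, (if a = x then c else d) = (if a = x then c - d else 0) + d := by
    intro x; by_cases h : a = x <;> simp [h]
  simp_rw [h]
  rw [Finset.sum_add_distrib, Finset.sum_ite_eq, Finset.sum_const]
  simp [Finset.card_univ]
  ring

lemma aux_sum_ite_const' {k : ℕ} (a : Fin k) (c d : ℝ) :
    (∑ x : Fin k, if x = a then c else d) = c + ((k:ℝ) - 1) * d := by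
  rw [← aux_sum_ite_const a c d]
  exact Finset.sum_congr rfl fun x _ => by simp [eq_comm]

/-- **Mean and variance of the sketching error under random sampling with
replacement.**  `(U_i, V_i)` are i.i.d. pairs with finite fourth moments,
independent of the sketch `Π = √(n/m)(ι_{k₁},…,ι_{k_m})ᵀ` whose i.i.d. row
indices are uniform on `[n]` (`p_i = 1/n`).  Then
`Var[n⁻¹(UᵀΠᵀΠV − UᵀV)] = ((n−1)/n) · (1/m) · Var(U₁V₁)`. -/
theorem uniform_rs_sketching_error_variance
    {Ω : Type*} [MeasurableSpace Ω] (μ : Measure Ω) [IsProbabilityMeasure μ]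
    (m n : ℕ) (hm : 0 < m) [NeZero n]
    (idx : Fin m → Ω → Fin n) (hidx_meas : ∀ t, Measurable (idx t))
    (hp : ∀ t i, (μ {ω | idx t ω = i}).toReal = 1 / n)
    (hiid : ∀ t t', t ≠ t' → IndepFun (idx t) (idx t') μ)
    (U V : Fin n → Ω → ℝ)
    (hU_meas : ∀ i, Measurable (U i)) (hV_meas : ∀ i, Measurable (V i))
    (hUV_indep : iIndepFun (fun i ω => (U i ω, V i ω)) μ)
    (hUV_ident : ∀ i, IdentDistrib (fun ω => (U i ω, V i ω))
      (fun ω => (U 0 ω, V 0 ω)) μ μ)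
    (hU4 : ∀ i, MemLp (U i) 4 μ) (hV4 : ∀ i, MemLp (V i) 4 μ)
    (hindep_data : IndepFun (fun ω (t : Fin m) => idx t ω)
      (fun ω (i : Fin n) => (U i ω, V i ω)) μ)
    (Pm : Ω → Matrix (Fin m) (Fin n) ℝ)
    (hPm : ∀ ω t i, Pm ω t i = if idx t ω = i then Real.sqrt ((n : ℝ) / m) else 0)
    (T : Ω → ℝ)
    (hT : ∀ ω, T ω = (n : ℝ)⁻¹ *
      ((Pm ω *ᵥ fun i => U i ω) ⬝ᵥ (Pm ω *ᵥ fun i => V i ω)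
        - (fun i => U i ω) ⬝ᵥ (fun i => V i ω))) :
    variance T μ =
      (((n : ℝ) - 1) / n) * (1 / m) * variance (fun ω => U 0 ω * V 0 ω) μ := by
  classical
  have hn0 : (n:ℝ) ≠ 0 := Nat.cast_ne_zero.mpr (NeZero.ne n)
  have hm0 : (m:ℝ) ≠ 0 := Nat.cast_ne_zero.mpr hm.ne'
  set W : Fin n → Ω → ℝ := fun i ω => U i ω * V i ω with hWdef
  have hWapp : ∀ i ω, U i ω * V i ω = W i ω := fun _ _ => rfl
  have hWmeas : ∀ i, Measurable (W i) := fun i => (hU_meas i).mul (hV_meas i)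
  have hW2 : ∀ i, MemLp (W i) 2 μ := fun i =>
    (hV4 i).smul (r := 2) (hU4 i) (hpqr := ⟨by simpa using aux_half.symm⟩)
  have hWint : ∀ i, Integrable (W i) μ := fun i => (hW2 i).integrable one_le_two
  have hWWint : ∀ i j, Integrable (fun ω => W i ω * W j ω) μ := fun i j =>
    memLp_one_iff_integrable.mp ((hW2 j).smul (r := 1) (hW2 i)
      (hpqr := ⟨by simpa using ENNReal.inv_two_add_inv_two⟩))
  set E1 : ℝ := ∫ ω, W 0 ω ∂μ with hE1def
  set E2 : ℝ := ∫ ω, (W 0 ω)^2 ∂μ with hE2def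
  have hmul : Measurable fun p : ℝ × ℝ => p.1 * p.2 := measurable_fst.mul measurable_snd
  have hintW : ∀ i, ∫ ω, W i ω ∂μ = E1 := fun i => ((hUV_ident i).comp hmul).integral_eq
  have hintW2 : ∀ i, ∫ ω, (W i ω)^2 ∂μ = E2 := fun i =>
    ((hUV_ident i).comp (hmul.pow_const 2)).integral_eq
  have hWWval : ∀ i j, ∫ ω, W i ω * W j ω ∂μ = if i = j then E2 else E1 * E1 := by
    intro i j
    by_cases hij : i = j
    · subst hij
      simp only [if_pos rfl]
      rw [← hintW2 i]
      exact integral_congr_ae (Filter.Eventually.of_forall fun ω => by ring)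
    · rw [if_neg hij]
      have hind : IndepFun (W i) (W j) μ := (hUV_indep.indepFun hij).comp hmul hmul
      have := hind.integral_fun_mul_eq_mul_integral (hWmeas i).aestronglyMeasurable (hWmeas j).aestronglyMeasurable
      rw [hintW i, hintW j] at this
      exact this
  -- independence of index block and data block
  have hYmeas : Measurable (fun ω (t : Fin m) => idx t ω) :=
    measurable_pi_lambda _ fun t => hidx_meas t
  have hZmeas : Measurable (fun ω (i : Fin n) => (U i ω, V i ω)) :=
    measurable_pi_lambda _ fun i => (hU_meas i).prodMk (hV_meas i)
  have key : ∀ (φ : (Fin m → Fin n) → ℝ) (ψ : (Fin n → ℝ × ℝ) → ℝ),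
      Measurable φ → Measurable ψ →
      ∫ ω, φ (fun t => idx t ω) * ψ (fun i => (U i ω, V i ω)) ∂μ
        = (∫ ω, φ (fun t => idx t ω) ∂μ) * ∫ ω, ψ (fun i => (U i ω, V i ω)) ∂μ := by
    intro φ ψ hφ hψ
    exact (hindep_data.comp hφ hψ).integral_fun_mul_eq_mul_integral
      (hφ.comp hYmeas).aestronglyMeasurable (hψ.comp hZmeas).aestronglyMeasurable
  have hχint : ∀ (t : Fin m) (i : Fin n),
      ∫ ω, (if idx t ω = i then (1:ℝ) else 0) ∂μ = 1 / n := by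
    intro t i
    have hs : MeasurableSet {ω | idx t ω = i} := (hidx_meas t) (measurableSet_singleton i)
    have h1 : (fun ω => if idx t ω = i then (1:ℝ) else 0)
        = Set.indicator {ω | idx t ω = i} (fun _ => (1:ℝ)) := by
      ext ω; simp [Set.indicator_apply]
    rw [h1, integral_indicator_const (1:ℝ) hs, smul_eq_mul, mul_one, measureReal_def, hp]
  have hχχint : ∀ (t t' : Fin m), t ≠ t' → ∀ (i j : Fin n),
      ∫ ω, (if idx t ω = i then (1:ℝ) else 0) * (if idx t' ω = j then 1 else 0) ∂μ
        = (1/n) * (1/n) := by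
    intro t t' htt' i j
    have hsA : MeasurableSet {ω | idx t ω = i} := (hidx_meas t) (measurableSet_singleton i)
    have hsB : MeasurableSet {ω | idx t' ω = j} := (hidx_meas t') (measurableSet_singleton j)
    have h1 : (fun ω => (if idx t ω = i then (1:ℝ) else 0) * (if idx t' ω = j then 1 else 0))
        = Set.indicator ({ω | idx t ω = i} ∩ {ω | idx t' ω = j}) (fun _ => (1:ℝ)) := by
      ext ω
      by_cases h1 : idx t ω = i <;> by_cases h2 : idx t' ω = j <;>
        simp [Set.indicator_apply, h1, h2]
    rw [h1, integral_indicator_const (1:ℝ) (hsA.inter hsB), smul_eq_mul, mul_one]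
    have hmul2 := (hiid t t' htt').measure_inter_preimage_eq_mul {i} {j}
      (measurableSet_singleton i) (measurableSet_singleton j)
    have hpre : {ω | idx t ω = i} ∩ {ω | idx t' ω = j}
        = idx t ⁻¹' {i} ∩ idx t' ⁻¹' {j} := rfl
    rw [hpre, measureReal_def, hmul2, ENNReal.toReal_mul]
    have e1 : (μ (idx t ⁻¹' {i})).toReal = 1 / n := hp t i
    have e2 : (μ (idx t' ⁻¹' {j})).toReal = 1 / n := hp t' j
    rw [e1, e2]
  -- measurable ψ's on the data block
  have hwj : ∀ j : Fin n, Measurable (fun w : Fin n → ℝ × ℝ => (w j).1 * (w j).2) :=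
    fun j => ((measurable_pi_apply j).fst).mul ((measurable_pi_apply j).snd)
  have keyχ1 : ∀ (t : Fin m) (i : Fin n) (ψ : (Fin n → ℝ × ℝ) → ℝ), Measurable ψ →
      ∫ ω, (if idx t ω = i then (1:ℝ) else 0) * ψ (fun i => (U i ω, V i ω)) ∂μ
        = (1/n) * ∫ ω, ψ (fun i => (U i ω, V i ω)) ∂μ := by
    intro t i ψ hψ
    have hev : Measurable (fun k : Fin m → Fin n => k t) := measurable_pi_apply t
    have hsett : MeasurableSet {k : Fin m → Fin n | k t = i} := by
      exact hev (measurableSet_singleton i)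
    have hφ : Measurable (fun k : Fin m → Fin n => if k t = i then (1:ℝ) else 0) :=
      Measurable.ite hsett measurable_const measurable_const
    have h := key _ ψ hφ hψ
    simp only [] at h
    rw [h, hχint t i]
  have keyχ2 : ∀ (t t' : Fin m), t ≠ t' → ∀ (i j : Fin n) (ψ : (Fin n → ℝ × ℝ) → ℝ),
      Measurable ψ →
      ∫ ω, ((if idx t ω = i then (1:ℝ) else 0) * (if idx t' ω = j then 1 else 0))
          * ψ (fun i => (U i ω, V i ω)) ∂μ
        = ((1/n) * (1/n)) * ∫ ω, ψ (fun i => (U i ω, V i ω)) ∂μ := by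
    intro t t' htt' i j ψ hψ
    have hev : Measurable (fun k : Fin m → Fin n => k t) := measurable_pi_apply t
    have hev' : Measurable (fun k : Fin m → Fin n => k t') := measurable_pi_apply t'
    have hsett : MeasurableSet {k : Fin m → Fin n | k t = i} := by
      exact hev (measurableSet_singleton i)
    have hsett' : MeasurableSet {k : Fin m → Fin n | k t' = j} := by
      exact hev' (measurableSet_singleton j)
    have hφ : Measurable (fun k : Fin m → Fin n =>
        (if k t = i then (1:ℝ) else 0) * (if k t' = j then 1 else 0)) :=
      (Measurable.ite hsett measurable_const measurable_const).mul
      (Measurable.ite hsett' measurable_const measurable_const)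
    have h := key _ ψ hφ hψ
    simp only [] at h
    rw [h, hχχint t t' htt' i j]
  -- indicator functions in ω
  have hχmeas : ∀ (t : Fin m) (i : Fin n),
      Measurable (fun ω => if idx t ω = i then (1:ℝ) else 0) := by
    intro t i
    have hs : MeasurableSet {ω | idx t ω = i} := (hidx_meas t) (measurableSet_singleton i)
    exact Measurable.ite hs measurable_const measurable_const
  have hχbdd : ∀ (t : Fin m) (i : Fin n), ∃ C, ∀ ω, ‖(if idx t ω = i then (1:ℝ) else 0)‖ ≤ C := by
    intro t i
    exact ⟨1, fun ω => by by_cases h : idx t ω = i <;> simp [h]⟩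
  have hχχbdd : ∀ (t t' : Fin m) (i j : Fin n), ∃ C, ∀ ω,
      ‖(if idx t ω = i then (1:ℝ) else 0) * (if idx t' ω = j then 1 else 0)‖ ≤ C := by
    intro t t' i j
    exact ⟨1, fun ω => by
      by_cases h1 : idx t ω = i <;> by_cases h2 : idx t' ω = j <;> simp [h1, h2]⟩
  -- integrability bricks
  have IχWW : ∀ (t : Fin m) (i : Fin n) (j j' : Fin n),
      Integrable (fun ω => (if idx t ω = i then (1:ℝ) else 0) * (W j ω * W j' ω)) μ :=
    fun t i j j' => (hWWint j j').bdd_mul (hχmeas t i).aestronglyMeasurable (Filter.Eventually.of_forall (hχbdd t i).choose_spec)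
  have IχW : ∀ (t : Fin m) (i : Fin n) (j : Fin n),
      Integrable (fun ω => (if idx t ω = i then (1:ℝ) else 0) * W j ω) μ :=
    fun t i j => (hWint j).bdd_mul (hχmeas t i).aestronglyMeasurable (Filter.Eventually.of_forall (hχbdd t i).choose_spec)
  have IχW2 : ∀ (t : Fin m) (i : Fin n),
      Integrable (fun ω => (if idx t ω = i then (1:ℝ) else 0) * (W i ω)^2) μ :=
    fun t i => (hW2 i).integrable_sq.bdd_mul (hχmeas t i).aestronglyMeasurable (Filter.Eventually.of_forall (hχbdd t i).choose_spec)
  have IχχWW : ∀ (t t' : Fin m) (i j : Fin n),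
      Integrable (fun ω => ((if idx t ω = i then (1:ℝ) else 0) * (if idx t' ω = j then 1 else 0))
        * (W i ω * W j ω)) μ :=
    fun t t' i j => (hWWint i j).bdd_mul
      ((hχmeas t i).mul (hχmeas t' j)).aestronglyMeasurable (Filter.Eventually.of_forall (hχχbdd t t' i j).choose_spec)
  -- pointwise expansions
  have pw1 : ∀ (t : Fin m) (ω : Ω),
      W (idx t ω) ω = ∑ i, (if idx t ω = i then (1:ℝ) else 0) * W i ω := by
    intro t ω
    simp [ite_mul, Finset.sum_ite_eq]
  have pw2 : ∀ (t : Fin m) (ω : Ω),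
      (W (idx t ω) ω)^2 = ∑ i, (if idx t ω = i then (1:ℝ) else 0) * (W i ω)^2 := by
    intro t ω
    simp [ite_mul, Finset.sum_ite_eq]
  have pw3 : ∀ (t t' : Fin m) (ω : Ω),
      W (idx t ω) ω * W (idx t' ω) ω
        = ∑ i, ∑ j, ((if idx t ω = i then (1:ℝ) else 0) * (if idx t' ω = j then 1 else 0))
            * (W i ω * W j ω) := by
    intro t t' ω
    simp [ite_mul, mul_ite, Finset.sum_ite_eq]
  have pw4 : ∀ (t : Fin m) (j : Fin n) (ω : Ω),
      W (idx t ω) ω * W j ω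
        = ∑ i, (if idx t ω = i then (1:ℝ) else 0) * (W i ω * W j ω) := by
    intro t j ω
    simp [ite_mul, Finset.sum_ite_eq]
  -- derived integrability
  have IW1' : ∀ t : Fin m, Integrable (fun ω => W (idx t ω) ω) μ := by
    intro t
    exact (integrable_finset_sum _ fun i _ => IχW t i i).congr
      (Filter.Eventually.of_forall fun ω => (pw1 t ω).symm)
  have IWW' : ∀ t t' : Fin m, Integrable (fun ω => W (idx t ω) ω * W (idx t' ω) ω) μ := by
    intro t t'
    exact (integrable_finset_sum _ fun i _ => integrable_finset_sum _ fun j _ =>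
      IχχWW t t' i j).congr (Filter.Eventually.of_forall fun ω => (pw3 t t' ω).symm)
  have IWj' : ∀ (t : Fin m) (j : Fin n), Integrable (fun ω => W (idx t ω) ω * W j ω) μ := by
    intro t j
    exact (integrable_finset_sum _ fun i _ => IχWW t i i j).congr
      (Filter.Eventually.of_forall fun ω => (pw4 t j ω).symm)
  -- first moment
  have M1 : ∀ t : Fin m, ∫ ω, W (idx t ω) ω ∂μ = E1 := by
    intro t
    simp_rw [pw1 t]
    rw [integral_finset_sum _ (fun i _ => IχW t i i)]
    have h : ∀ i : Fin n, ∫ ω, (if idx t ω = i then (1:ℝ) else 0) * W i ω ∂μ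
        = (1/n) * E1 := by
      intro i
      have h2 := keyχ1 t i (fun w => (w i).1 * (w i).2) (hwj i)
      simp only [] at h2
      simp only [hWapp] at h2
      rw [h2, hintW i]
    rw [Finset.sum_congr rfl (fun i _ => h i), Finset.sum_const, Finset.card_univ,
      Fintype.card_fin, nsmul_eq_mul]
    field_simp
  -- second moment, diagonal
  have M2 : ∀ t : Fin m, ∫ ω, (W (idx t ω) ω)^2 ∂μ = E2 := by
    intro t
    simp_rw [pw2 t]
    rw [integral_finset_sum _ (fun i _ => IχW2 t i)]
    have h : ∀ i : Fin n, ∫ ω, (if idx t ω = i then (1:ℝ) else 0) * (W i ω)^2 ∂μ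
        = (1/n) * E2 := by
      intro i
      have h2 := keyχ1 t i (fun w => ((w i).1 * (w i).2)^2) ((hwj i).pow_const 2)
      simp only [] at h2
      simp only [hWapp] at h2
      rw [h2, hintW2 i]
    rw [Finset.sum_congr rfl (fun i _ => h i), Finset.sum_const, Finset.card_univ,
      Fintype.card_fin, nsmul_eq_mul]
    field_simp
  -- second moment, off-diagonal
  have M3 : ∀ t t' : Fin m, t ≠ t' →
      ∫ ω, W (idx t ω) ω * W (idx t' ω) ω ∂μ
        = (1/n) * (1/n) * ((n:ℝ) * (E2 + ((n:ℝ)-1) * (E1*E1))) := by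
    intro t t' htt'
    simp_rw [pw3 t t']
    rw [integral_finset_sum _ (fun i _ => integrable_finset_sum _ fun j _ => IχχWW t t' i j)]
    have h : ∀ i : Fin n,
        (∫ ω, ∑ j, ((if idx t ω = i then (1:ℝ) else 0) * (if idx t' ω = j then 1 else 0))
          * (W i ω * W j ω) ∂μ)
        = (1/n) * (1/n) * (E2 + ((n:ℝ)-1) * (E1*E1)) := by
      intro i
      rw [integral_finset_sum _ (fun j _ => IχχWW t t' i j)]
      have h1 : ∀ j : Fin n,
          ∫ ω, ((if idx t ω = i then (1:ℝ) else 0) * (if idx t' ω = j then 1 else 0))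
            * (W i ω * W j ω) ∂μ
          = (1/n) * (1/n) * (if i = j then E2 else E1 * E1) := by
        intro j
        have h2 := keyχ2 t t' htt' i j
          (fun w => ((w i).1 * (w i).2) * ((w j).1 * (w j).2)) ((hwj i).mul (hwj j))
        simp only [] at h2
        simp only [hWapp] at h2
        rw [h2, hWWval i j]
      rw [Finset.sum_congr rfl (fun j _ => h1 j), ← Finset.mul_sum, aux_sum_ite_const]
    rw [Finset.sum_congr rfl (fun i _ => h i), Finset.sum_const, Finset.card_univ,
      Fintype.card_fin, nsmul_eq_mul]
    ring
  -- mixed moment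
  have M4 : ∀ (t : Fin m) (j : Fin n),
      ∫ ω, W (idx t ω) ω * W j ω ∂μ = (1/n) * (E2 + ((n:ℝ)-1) * (E1*E1)) := by
    intro t j
    simp_rw [pw4 t j]
    rw [integral_finset_sum _ (fun i _ => IχWW t i i j)]
    have h1 : ∀ i : Fin n,
        ∫ ω, (if idx t ω = i then (1:ℝ) else 0) * (W i ω * W j ω) ∂μ
          = (1/n) * (if i = j then E2 else E1 * E1) := by
      intro i
      have h2 := keyχ1 t i (fun w => ((w i).1 * (w i).2) * ((w j).1 * (w j).2))
        ((hwj i).mul (hwj j))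
      simp only [] at h2
      simp only [hWapp] at h2
      rw [h2, hWWval i j]
    rw [Finset.sum_congr rfl (fun i _ => h1 i), ← Finset.mul_sum, aux_sum_ite_const']
  -- rewrite T
  have hT' : ∀ ω, T ω = (1/m) * (∑ t, W (idx t ω) ω) - (1/n) * (∑ i, W i ω) := by
    intro ω
    have hc : Real.sqrt ((n:ℝ)/m) * Real.sqrt ((n:ℝ)/m) = (n:ℝ)/m :=
      Real.mul_self_sqrt (by positivity)
    have h1 : ∀ t, (Pm ω *ᵥ fun i => U i ω) t = Real.sqrt ((n:ℝ)/m) * U (idx t ω) ω := by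
      intro t
      simp [Matrix.mulVec, dotProduct, hPm, ite_mul, Finset.sum_ite_eq]
    have h2 : ∀ t, (Pm ω *ᵥ fun i => V i ω) t = Real.sqrt ((n:ℝ)/m) * V (idx t ω) ω := by
      intro t
      simp [Matrix.mulVec, dotProduct, hPm, ite_mul, Finset.sum_ite_eq]
    rw [hT ω]
    simp only [dotProduct]
    simp_rw [h1, h2]
    have h3 : ∀ t, (Real.sqrt ((n:ℝ)/m) * U (idx t ω) ω)
        * (Real.sqrt ((n:ℝ)/m) * V (idx t ω) ω) = ((n:ℝ)/m) * W (idx t ω) ω := by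
      intro t
      calc (Real.sqrt ((n:ℝ)/m) * U (idx t ω) ω) * (Real.sqrt ((n:ℝ)/m) * V (idx t ω) ω)
          = (Real.sqrt ((n:ℝ)/m) * Real.sqrt ((n:ℝ)/m)) * (U (idx t ω) ω * V (idx t ω) ω) := by
            ring
        _ = ((n:ℝ)/m) * W (idx t ω) ω := by rw [hc, hWapp]
    simp_rw [h3, hWapp]
    rw [← Finset.mul_sum]
    field_simp
  -- MemLp of T
  have hχW2mem : ∀ (t : Fin m) (i : Fin n),
      MemLp (fun ω => (if idx t ω = i then (1:ℝ) else 0) * W i ω) 2 μ := by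
    intro t i
    refine MemLp.of_le (hW2 i) ((hχmeas t i).mul (hWmeas i)).aestronglyMeasurable ?_
    refine Filter.Eventually.of_forall fun ω => ?_
    by_cases h : idx t ω = i <;> simp [h, norm_nonneg]
  have hgt2 : ∀ t : Fin m, MemLp (fun ω => W (idx t ω) ω) 2 μ := fun t =>
    MemLp.ae_eq (Filter.Eventually.of_forall fun ω => (pw1 t ω).symm)
      (memLp_finset_sum Finset.univ (fun i _ => hχW2mem t i))
  have hTmem : MemLp T 2 μ :=
    MemLp.ae_eq (Filter.Eventually.of_forall fun ω => (hT' ω).symm)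
      (((memLp_finset_sum Finset.univ (fun t _ => hgt2 t)).const_mul ((1:ℝ)/m)).sub
        ((memLp_finset_sum Finset.univ (fun i _ => hW2 i)).const_mul ((1:ℝ)/n)))
  -- integrability of the sums
  have IA : Integrable (fun ω => ∑ t, W (idx t ω) ω) μ :=
    integrable_finset_sum _ fun t _ => IW1' t
  have IB : Integrable (fun ω => ∑ i, W i ω) μ :=
    integrable_finset_sum _ fun i _ => hWint i
  have IP1 : Integrable (fun ω => ∑ t, ∑ t', W (idx t ω) ω * W (idx t' ω) ω) μ :=
    integrable_finset_sum _ fun t _ => integrable_finset_sum _ fun t' _ => IWW' t t'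
  have IP2 : Integrable (fun ω => ∑ t, ∑ j, W (idx t ω) ω * W j ω) μ :=
    integrable_finset_sum _ fun t _ => integrable_finset_sum _ fun j _ => IWj' t j
  have IP3 : Integrable (fun ω => ∑ i, ∑ j, W i ω * W j ω) μ :=
    integrable_finset_sum _ fun i _ => integrable_finset_sum _ fun j _ => hWWint i j
  -- mean of T
  have hET : ∫ ω, T ω ∂μ = 0 := by
    simp_rw [hT']
    rw [integral_sub (IA.const_mul _) (IB.const_mul _), integral_const_mul, integral_const_mul,
      integral_finset_sum _ (fun t _ => IW1' t), integral_finset_sum _ (fun i _ => hWint i),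
      Finset.sum_congr rfl (fun t _ => M1 t), Finset.sum_congr rfl (fun i _ => hintW i),
      Finset.sum_const, Finset.sum_const, Finset.card_univ, Finset.card_univ,
      Fintype.card_fin, Fintype.card_fin, nsmul_eq_mul, nsmul_eq_mul]
    field_simp
    ring
  -- second moment of T
  have hT2pt : ∀ ω, T ω ^ 2 =
      (1/m)^2 * (∑ t, ∑ t', W (idx t ω) ω * W (idx t' ω) ω)
      - 2*((1/m)*(1/n)) * (∑ t, ∑ j, W (idx t ω) ω * W j ω)
      + (1/n)^2 * (∑ i, ∑ j, W i ω * W j ω) := by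
    intro ω
    rw [hT' ω]
    have e1 : (∑ t, ∑ t', W (idx t ω) ω * W (idx t' ω) ω)
        = (∑ t, W (idx t ω) ω) * (∑ t', W (idx t' ω) ω) := (Finset.sum_mul_sum _ _ _ _).symm
    have e2 : (∑ t, ∑ j, W (idx t ω) ω * W j ω)
        = (∑ t, W (idx t ω) ω) * (∑ j, W j ω) := (Finset.sum_mul_sum _ _ _ _).symm
    have e3 : (∑ i, ∑ j, W i ω * W j ω)
        = (∑ i, W i ω) * (∑ j, W j ω) := (Finset.sum_mul_sum _ _ _ _).symm
    rw [e1, e2, e3]; ring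
  have hIT2 : ∫ ω, T ω ^ 2 ∂μ =
      (1/m)^2 * (∑ t : Fin m, ∑ t' : Fin m, ∫ ω, W (idx t ω) ω * W (idx t' ω) ω ∂μ)
      - 2*((1/m)*(1/n)) * (∑ t : Fin m, ∑ j : Fin n, ∫ ω, W (idx t ω) ω * W j ω ∂μ)
      + (1/n)^2 * (∑ i : Fin n, ∑ j : Fin n, ∫ ω, W i ω * W j ω ∂μ) := by
    simp_rw [hT2pt]
    have I1 : Integrable (fun ω => (1/(m:ℝ))^2 *
        (∑ t : Fin m, ∑ t' : Fin m, W (idx t ω) ω * W (idx t' ω) ω)) μ := IP1.const_mul _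
    have I2 : Integrable (fun ω => 2*((1/(m:ℝ))*(1/(n:ℝ))) *
        (∑ t : Fin m, ∑ j : Fin n, W (idx t ω) ω * W j ω)) μ := IP2.const_mul _
    have I12 : Integrable (fun ω => (1/(m:ℝ))^2 *
        (∑ t : Fin m, ∑ t' : Fin m, W (idx t ω) ω * W (idx t' ω) ω)
        - 2*((1/(m:ℝ))*(1/(n:ℝ))) * (∑ t : Fin m, ∑ j : Fin n, W (idx t ω) ω * W j ω)) μ :=
      I1.sub I2
    rw [integral_add I12 (IP3.const_mul _), integral_sub I1 I2,
      integral_const_mul, integral_const_mul, integral_const_mul,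
      integral_finset_sum _ (fun t _ => integrable_finset_sum _ fun t' _ => IWW' t t'),
      integral_finset_sum _ (fun t _ => integrable_finset_sum _ fun j _ => IWj' t j),
      integral_finset_sum _ (fun i _ => integrable_finset_sum _ fun j _ => hWWint i j),
      Finset.sum_congr rfl (fun t _ => integral_finset_sum _ fun t' _ => IWW' t t'),
      Finset.sum_congr rfl (fun t _ => integral_finset_sum _ fun j _ => IWj' t j),
      Finset.sum_congr rfl (fun i _ => integral_finset_sum _ fun j _ => hWWint i j)]
  -- evaluate the three double sums
  have hP1 : (∑ t : Fin m, ∑ t' : Fin m, ∫ ω, W (idx t ω) ω * W (idx t' ω) ω ∂μ)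
      = (m:ℝ) * (E2 + ((m:ℝ)-1) * ((1/n) * (1/n) * ((n:ℝ) * (E2 + ((n:ℝ)-1) * (E1*E1))))) := by
    have h : ∀ t t' : Fin m, ∫ ω, W (idx t ω) ω * W (idx t' ω) ω ∂μ
        = if t = t' then E2 else (1/n) * (1/n) * ((n:ℝ) * (E2 + ((n:ℝ)-1)*(E1*E1))) := by
      intro t t'
      by_cases h : t = t'
      · subst h
        rw [if_pos rfl, ← M2 t]
        exact integral_congr_ae (Filter.Eventually.of_forall fun ω => by ring)
      · rw [if_neg h]; exact M3 t t' h
    rw [Finset.sum_congr rfl fun t _ => Finset.sum_congr rfl fun t' _ => h t t',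
      Finset.sum_congr rfl fun t _ => aux_sum_ite_const t _ _, Finset.sum_const,
      Finset.card_univ, Fintype.card_fin, nsmul_eq_mul]
  have hP2 : (∑ t : Fin m, ∑ j : Fin n, ∫ ω, W (idx t ω) ω * W j ω ∂μ)
      = (m:ℝ) * ((n:ℝ) * ((1/n) * (E2 + ((n:ℝ)-1)*(E1*E1)))) := by
    rw [Finset.sum_congr rfl fun t _ => Finset.sum_congr rfl fun j _ => M4 t j,
      Finset.sum_congr rfl fun t _ => by
        rw [Finset.sum_const, Finset.card_univ, Fintype.card_fin, nsmul_eq_mul],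
      Finset.sum_const, Finset.card_univ, Fintype.card_fin, nsmul_eq_mul]
  have hP3 : (∑ i : Fin n, ∑ j : Fin n, ∫ ω, W i ω * W j ω ∂μ)
      = (n:ℝ) * (E2 + ((n:ℝ)-1) * (E1*E1)) := by
    rw [Finset.sum_congr rfl fun i _ => Finset.sum_congr rfl fun j _ => hWWval i j,
      Finset.sum_congr rfl fun i _ => aux_sum_ite_const i _ _, Finset.sum_const,
      Finset.card_univ, Fintype.card_fin, nsmul_eq_mul]
  -- conclude
  have hvar0 : variance (fun ω => U 0 ω * V 0 ω) μ = E2 - E1 ^ 2 := by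
    have h := variance_eq_sub (hW2 0)
    simp only [Pi.pow_apply] at h
    rw [← hE2def, ← hE1def] at h
    exact h
  have hvarT := variance_eq_sub hTmem
  simp only [Pi.pow_apply] at hvarT
  rw [hvarT, hvar0, hIT2, hET, hP1, hP2, hP3]
  field_simp
  ring
end

section
/- Let Π satisfy the RP moment conditions with i.i.d. columns and let (U_i,V_i) be i.i.d. with finite fourth moments, independent of Π. Define H as above and G(w₁,w₂) = E[H(W,w₁)H(W,w₂)] where W is an independent copy. Then E[G(W_i,W_j)²] = O(m^{−3}) for i ≠ j. -/
open MeasureTheory ProbabilityTheory Matrix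

open scoped ENNReal NNReal

section Aux

variable {Ω : Type*} [MeasurableSpace Ω] {μ : Measure Ω}

lemma my_integrable_of_ne_zero {f : Ω → ℝ} (h : (∫ ω, f ω ∂μ) ≠ 0) : Integrable f μ := by
  by_contra hc; exact h (integral_undef hc)

lemma my_integrable_mul_of_sq {f g : Ω → ℝ}
    (hfm : AEStronglyMeasurable f μ) (hgm : AEStronglyMeasurable g μ)
    (hf : Integrable (fun ω => f ω ^ 2) μ) (hg : Integrable (fun ω => g ω ^ 2) μ) :
    Integrable (fun ω => f ω * g ω) μ := by
  refine Integrable.mono' (((hf.add hg).div_const 2)) (hfm.mul hgm) ?_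
  filter_upwards with ω
  rw [Real.norm_eq_abs, abs_mul]
  show |f ω| * |g ω| ≤ ((fun ω => f ω ^ 2) + fun ω => g ω ^ 2) ω / 2
  simp only [Pi.add_apply]
  nlinarith [sq_nonneg (|f ω| - |g ω|), sq_abs (f ω), sq_abs (g ω)]

lemma my_integrable_pow4 [IsProbabilityMeasure μ] {f : Ω → ℝ} (h : MemLp f (4 : ℝ≥0∞) μ) :
    Integrable (fun ω => f ω ^ 4) μ := by
  have h1 : MemLp (fun x => ‖f x‖ ^ ((4 : ℝ≥0∞)).toReal) 1 μ :=
    h.norm_rpow (by norm_num) (by norm_num)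
  rw [memLp_one_iff_integrable] at h1
  refine h1.congr ?_
  filter_upwards with ω
  have : ((4 : ℝ≥0∞)).toReal = ((4 : ℕ) : ℝ) := by norm_num
  rw [this, Real.rpow_natCast, Real.norm_eq_abs, ← abs_pow, abs_of_nonneg (by positivity)]

lemma my_inner_eval {m : ℕ}
    (P : Fin m → Ω → ℝ) (U0 V0 : Ω → ℝ) (x y : Fin m → ℝ) (u1 v1 u2 v2 : ℝ)
    (a b c : ℝ)
    (hI1 : ∀ k l, Integrable (fun ω => P k ω * P l ω * U0 ω ^ 2) μ)
    (hI2 : ∀ k l, Integrable (fun ω => P k ω * P l ω * (U0 ω * V0 ω)) μ)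
    (hI3 : ∀ k l, Integrable (fun ω => P k ω * P l ω * V0 ω ^ 2) μ)
    (hE1 : ∀ k l, (∫ ω, P k ω * P l ω * U0 ω ^ 2 ∂μ) = (∫ ω, P k ω * P l ω ∂μ) * a)
    (hE2 : ∀ k l, (∫ ω, P k ω * P l ω * (U0 ω * V0 ω) ∂μ) = (∫ ω, P k ω * P l ω ∂μ) * c)
    (hE3 : ∀ k l, (∫ ω, P k ω * P l ω * V0 ω ^ 2 ∂μ) = (∫ ω, P k ω * P l ω ∂μ) * b) :
    (∫ ω, (∑ k, (U0 ω * P k ω * x k * v1 + u1 * x k * P k ω * V0 ω))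
        * (∑ k, (U0 ω * P k ω * y k * v2 + u2 * y k * P k ω * V0 ω)) ∂μ)
      = ∑ k, ∑ l, (∫ ω, P k ω * P l ω ∂μ) *
          (a * (x k * v1 * (y l * v2))
            + c * (x k * v1 * (u2 * y l) + u1 * x k * (y l * v2))
            + b * (u1 * x k * (u2 * y l))) := by
  have hIkl : ∀ k l : Fin m, Integrable (fun ω =>
      P k ω * P l ω * U0 ω ^ 2 * (x k * v1 * (y l * v2))
      + P k ω * P l ω * (U0 ω * V0 ω) * (x k * v1 * (u2 * y l) + u1 * x k * (y l * v2))
      + P k ω * P l ω * V0 ω ^ 2 * (u1 * x k * (u2 * y l))) μ := fun k l =>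
    (((hI1 k l).mul_const _).add ((hI2 k l).mul_const _)).add ((hI3 k l).mul_const _)
  have e1 : (fun ω => (∑ k, (U0 ω * P k ω * x k * v1 + u1 * x k * P k ω * V0 ω))
        * (∑ k, (U0 ω * P k ω * y k * v2 + u2 * y k * P k ω * V0 ω)))
      = fun ω => ∑ k : Fin m, ∑ l : Fin m,
          (P k ω * P l ω * U0 ω ^ 2 * (x k * v1 * (y l * v2))
           + P k ω * P l ω * (U0 ω * V0 ω) * (x k * v1 * (u2 * y l) + u1 * x k * (y l * v2))
           + P k ω * P l ω * V0 ω ^ 2 * (u1 * x k * (u2 * y l))) := by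
    funext ω
    rw [Finset.sum_mul_sum]
    exact Finset.sum_congr rfl fun k _ => Finset.sum_congr rfl fun l _ => by ring
  rw [e1]
  rw [integral_finset_sum _ fun k _ => integrable_finset_sum _ fun l _ => hIkl k l]
  refine Finset.sum_congr rfl fun k _ => ?_
  rw [integral_finset_sum _ fun l _ => hIkl k l]
  refine Finset.sum_congr rfl fun l _ => ?_
  have hA : Integrable (fun ω => P k ω * P l ω * U0 ω ^ 2 * (x k * v1 * (y l * v2))) μ :=
    (hI1 k l).mul_const _
  have hB : Integrable (fun ω => P k ω * P l ω * (U0 ω * V0 ω)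
      * (x k * v1 * (u2 * y l) + u1 * x k * (y l * v2))) μ :=
    (hI2 k l).mul_const _
  have hC : Integrable (fun ω => P k ω * P l ω * V0 ω ^ 2 * (u1 * x k * (u2 * y l))) μ :=
    (hI3 k l).mul_const _
  have hAB : Integrable (fun ω => P k ω * P l ω * U0 ω ^ 2 * (x k * v1 * (y l * v2))
      + P k ω * P l ω * (U0 ω * V0 ω)
      * (x k * v1 * (u2 * y l) + u1 * x k * (y l * v2))) μ := hA.add hB
  rw [integral_add hAB hC, integral_add hA hB,
      integral_mul_const, integral_mul_const, integral_mul_const, hE1, hE2, hE3]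
  ring

lemma my_quad_bound (A B C w x y z : ℝ) :
    (A*w + C*(x+y) + B*z)^2 ≤ 3*A^2*w^2 + 6*C^2*x^2 + 6*C^2*y^2 + 3*B^2*z^2 := by
  nlinarith [sq_nonneg (A*w - C*(x+y)), sq_nonneg (A*w - B*z), sq_nonneg (C*(x+y) - B*z),
    sq_nonneg (C*x - C*y)]

end Aux

/-- **`E[G(W_i,W_j)²] = O(m⁻³)`.**
For the degenerate kernel `H(w₁,w₂) = Σ_k (u₁π_{k1}π_{k2}v₂ + u₂π_{k2}π_{k1}v₁)`
and `G(w₁,w₂) = E[H(W,w₁)H(W,w₂)]` (with `W` an independent copy, realized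
here through the i.i.d. observation `W₀ = (U₀, V₀, Π-column 0)`), if `Π`
satisfies the RP moment conditions with i.i.d. columns and is independent of
the i.i.d. data `(U_i, V_i)` having finite fourth moments, then there is a
constant `C` (uniform in `m`, `Π`, `i`, `j`) with
`E[G(W_i,W_j)²] ≤ C m⁻³` for all `i ≠ j`. -/
theorem rp_G_second_moment_bound
    {Ω : Type*} [MeasurableSpace Ω] (μ : Measure Ω) [IsProbabilityMeasure μ]
    (n : ℕ) [NeZero n]
    (U V : Fin n → Ω → ℝ)
    (hU_meas : ∀ i, Measurable (U i)) (hV_meas : ∀ i, Measurable (V i))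
    (hUV_indep : iIndepFun (fun i ω => (U i ω, V i ω)) μ)
    (hUV_ident : ∀ i, IdentDistrib (fun ω => (U i ω, V i ω))
      (fun ω => (U 0 ω, V 0 ω)) μ μ)
    (hU4 : ∀ i, MemLp (U i) 4 μ) (hV4 : ∀ i, MemLp (V i) 4 μ) :
    ∃ C : ℝ, ∀ (m : ℕ), 0 < m →
      ∀ (Pm : Ω → Matrix (Fin m) (Fin n) ℝ),
      (∀ k i, Measurable fun ω => Pm ω k i) →
      (∀ k i, (∫ ω, Pm ω k i ∂μ) = 0) →
      (∀ k i, (∫ ω, (Pm ω k i) ^ 2 ∂μ) = 1 / m) →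
      (∀ (k : Fin m) (i j : Fin n), i ≠ j →
        (∫ ω, Pm ω k i * Pm ω k j ∂μ) = 0) →
      (∀ (k : Fin m) (i j : Fin n), i ≠ j →
        (∫ ω, (Pm ω k i) ^ 2 * (Pm ω k j) ^ 2 ∂μ) = 1 / (m : ℝ) ^ 2) →
      (∀ (k l : Fin m) (i j r t : Fin n), k ≠ l → i ≠ j → r ≠ t →
        (∫ ω, Pm ω k i * Pm ω k j * Pm ω l r * Pm ω l t ∂μ) = 0) →
      iIndepFun
        (fun (i : Fin n) ω (k : Fin m) => Pm ω k i) μ →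
      (∀ i : Fin n, IdentDistrib (fun ω (k : Fin m) => Pm ω k i)
        (fun ω (k : Fin m) => Pm ω k 0) μ μ) →
      IndepFun (fun ω (k : Fin m) (i : Fin n) => Pm ω k i)
        (fun ω (i : Fin n) => (U i ω, V i ω)) μ →
      ∀ i j : Fin n, i ≠ j →
        (∫ ω, (∫ ω', (∑ k, (U 0 ω' * Pm ω' k 0 * Pm ω k i * V i ω
              + U i ω * Pm ω k i * Pm ω' k 0 * V 0 ω'))
            * (∑ k, (U 0 ω' * Pm ω' k 0 * Pm ω k j * V j ω
              + U j ω * Pm ω k j * Pm ω' k 0 * V 0 ω')) ∂μ) ^ 2 ∂μ)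
          ≤ C / (m : ℝ) ^ 3 := by
  classical
  refine ⟨3 * (∫ ω, U 0 ω ^ 2 ∂μ) ^ 2 * ((∫ ω, V 0 ω ^ 2 ∂μ) * ∫ ω, V 0 ω ^ 2 ∂μ)
      + 6 * (∫ ω, U 0 ω * V 0 ω ∂μ) ^ 2 * ((∫ ω, V 0 ω ^ 2 ∂μ) * ∫ ω, U 0 ω ^ 2 ∂μ)
      + 6 * (∫ ω, U 0 ω * V 0 ω ∂μ) ^ 2 * ((∫ ω, U 0 ω ^ 2 ∂μ) * ∫ ω, V 0 ω ^ 2 ∂μ)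
      + 3 * (∫ ω, V 0 ω ^ 2 ∂μ) ^ 2 * ((∫ ω, U 0 ω ^ 2 ∂μ) * ∫ ω, U 0 ω ^ 2 ∂μ), ?_⟩
  intro m hm Pm hPmeas hP1 hP2 hP2c hP4 hP4c hPcols hPid hPUV i j hij
  have hmR : (0:ℝ) < (m:ℝ) := by exact_mod_cast hm
  have hm0 : (m:ℝ) ≠ 0 := ne_of_gt hmR
  -- measurability of the bundled data map
  have hUVmeas : Measurable (fun ω => fun r : Fin n => (U r ω, V r ω)) :=
    measurable_pi_lambda _ fun r => (hU_meas r).prodMk (hV_meas r)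
  -- integrability of the data
  have hU2 : ∀ r, MemLp (U r) 2 μ := fun r => (hU4 r).mono_exponent (by norm_num)
  have hV2 : ∀ r, MemLp (V r) 2 μ := fun r => (hV4 r).mono_exponent (by norm_num)
  have hUsq : ∀ r, Integrable (fun ω => U r ω ^ 2) μ := fun r => (hU2 r).integrable_sq
  have hVsq : ∀ r, Integrable (fun ω => V r ω ^ 2) μ := fun r => (hV2 r).integrable_sq
  have hU4i : ∀ r, Integrable (fun ω => U r ω ^ 4) μ := fun r => my_integrable_pow4 (hU4 r)
  have hV4i : ∀ r, Integrable (fun ω => V r ω ^ 4) μ := fun r => my_integrable_pow4 (hV4 r)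
  have hUVi : Integrable (fun ω => U 0 ω * V 0 ω) μ :=
    my_integrable_mul_of_sq (hU_meas 0).aestronglyMeasurable (hV_meas 0).aestronglyMeasurable
      (hUsq 0) (hVsq 0)
  -- integrability of projection entries
  have hPsqInt : ∀ (k : Fin m) (r : Fin n), Integrable (fun ω => Pm ω k r ^ 2) μ := by
    intro k r
    refine my_integrable_of_ne_zero ?_
    rw [hP2 k r]
    exact one_div_ne_zero hm0
  have hPPInt : ∀ (k l : Fin m) (r : Fin n), Integrable (fun ω => Pm ω k r * Pm ω l r) μ :=
    fun k l r => my_integrable_mul_of_sq (hPmeas k r).aestronglyMeasurable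
      (hPmeas l r).aestronglyMeasurable (hPsqInt k r) (hPsqInt l r)
  have hProdSqInt : ∀ (k : Fin m), Integrable (fun ω => (Pm ω k i * Pm ω k j) ^ 2) μ := by
    intro k
    have h0 : Integrable (fun ω => Pm ω k i ^ 2 * Pm ω k j ^ 2) μ := by
      refine my_integrable_of_ne_zero ?_
      rw [hP4 k i j hij]
      exact one_div_ne_zero (pow_ne_zero _ hm0)
    exact h0.congr (Filter.Eventually.of_forall fun ω => by ring)
  have h4Int : ∀ (k l : Fin m),
      Integrable (fun ω => (Pm ω k i * Pm ω k j) * (Pm ω l i * Pm ω l j)) μ :=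
    fun k l => my_integrable_mul_of_sq ((hPmeas k i).mul (hPmeas k j)).aestronglyMeasurable
      ((hPmeas l i).mul (hPmeas l j)).aestronglyMeasurable (hProdSqInt k) (hProdSqInt l)
  -- off-diagonal second moments of column 0 vanish
  have hs : ∀ k l : Fin m, k ≠ l → (∫ ω, Pm ω k 0 * Pm ω l 0 ∂μ) = 0 := by
    intro k l hkl
    have hu : Measurable fun v : Fin m → ℝ => v k * v l :=
      (measurable_pi_apply k).mul (measurable_pi_apply l)
    have hcoli : (∫ ω, Pm ω k i * Pm ω l i ∂μ) = ∫ ω, Pm ω k 0 * Pm ω l 0 ∂μ :=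
      ((hPid i).comp hu).integral_eq
    have hcolj : (∫ ω, Pm ω k j * Pm ω l j ∂μ) = ∫ ω, Pm ω k 0 * Pm ω l 0 ∂μ :=
      ((hPid j).comp hu).integral_eq
    have hind : IndepFun (fun ω => Pm ω k i * Pm ω l i) (fun ω => Pm ω k j * Pm ω l j) μ :=
      (hPcols.indepFun hij).comp hu hu
    have h0 : (∫ ω, (Pm ω k i * Pm ω l i) * (Pm ω k j * Pm ω l j) ∂μ)
        = (∫ ω, Pm ω k i * Pm ω l i ∂μ) * ∫ ω, Pm ω k j * Pm ω l j ∂μ :=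
      hind.integral_fun_mul_eq_mul_integral ((hPmeas k i).mul (hPmeas l i)).aestronglyMeasurable
        ((hPmeas k j).mul (hPmeas l j)).aestronglyMeasurable
    have h1 : (∫ ω, (Pm ω k i * Pm ω l i) * (Pm ω k j * Pm ω l j) ∂μ) = 0 := by
      rw [integral_congr_ae (g := fun ω => Pm ω k i * Pm ω k j * Pm ω l i * Pm ω l j)
        (Filter.Eventually.of_forall fun ω => by ring)]
      exact hP4c k l i j i j hkl hij hij
    rw [hcoli, hcolj] at h0
    exact mul_self_eq_zero.mp (h0.symm.trans h1)
  have hsdiag : ∀ k : Fin m, (∫ ω, Pm ω k 0 * Pm ω k 0 ∂μ) = 1 / (m:ℝ) := by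
    intro k
    rw [integral_congr_ae (g := fun ω => Pm ω k 0 ^ 2)
      (Filter.Eventually.of_forall fun ω => (pow_two (Pm ω k 0)).symm)]
    exact hP2 k 0
  -- factorization of mixed moments between Pm and (U,V)
  have hφmeas : ∀ k l : Fin m, Measurable fun M : Fin m → Fin n → ℝ => M k 0 * M l 0 :=
    fun k l => by fun_prop
  have hψU : Measurable fun w : Fin n → ℝ × ℝ => (w 0).1 ^ 2 :=
    ((measurable_pi_apply (0 : Fin n)).fst).pow_const 2
  have hψUV : Measurable fun w : Fin n → ℝ × ℝ => (w 0).1 * (w 0).2 :=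
    ((measurable_pi_apply (0 : Fin n)).fst).mul ((measurable_pi_apply (0 : Fin n)).snd)
  have hψV : Measurable fun w : Fin n → ℝ × ℝ => (w 0).2 ^ 2 :=
    ((measurable_pi_apply (0 : Fin n)).snd).pow_const 2
  have hfact : ∀ (k l : Fin m) (ψ : (Fin n → ℝ × ℝ) → ℝ), Measurable ψ →
      (∫ ω, Pm ω k 0 * Pm ω l 0 * ψ (fun r => (U r ω, V r ω)) ∂μ)
        = (∫ ω, Pm ω k 0 * Pm ω l 0 ∂μ) * ∫ ω, ψ (fun r => (U r ω, V r ω)) ∂μ := by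
    intro k l ψ hψ
    have hind : IndepFun (fun ω => Pm ω k 0 * Pm ω l 0)
        (fun ω => ψ (fun r => (U r ω, V r ω))) μ := hPUV.comp (hφmeas k l) hψ
    exact hind.integral_fun_mul_eq_mul_integral ((hPmeas k 0).mul (hPmeas l 0)).aestronglyMeasurable
      (hψ.comp hUVmeas).aestronglyMeasurable
  have hfactInt : ∀ (k l : Fin m) (ψ : (Fin n → ℝ × ℝ) → ℝ), Measurable ψ →
      Integrable (fun ω => ψ (fun r => (U r ω, V r ω))) μ →
      Integrable (fun ω => Pm ω k 0 * Pm ω l 0 * ψ (fun r => (U r ω, V r ω))) μ := by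
    intro k l ψ hψ hint
    have hind : IndepFun (fun ω => Pm ω k 0 * Pm ω l 0)
        (fun ω => ψ (fun r => (U r ω, V r ω))) μ := hPUV.comp (hφmeas k l) hψ
    exact hind.integrable_mul (hPPInt k l 0) hint
  have hI1 : ∀ k l : Fin m, Integrable (fun ω => Pm ω k 0 * Pm ω l 0 * U 0 ω ^ 2) μ :=
    fun k l => hfactInt k l _ hψU (hUsq 0)
  have hI2 : ∀ k l : Fin m, Integrable (fun ω => Pm ω k 0 * Pm ω l 0 * (U 0 ω * V 0 ω)) μ :=
    fun k l => hfactInt k l _ hψUV hUVi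
  have hI3 : ∀ k l : Fin m, Integrable (fun ω => Pm ω k 0 * Pm ω l 0 * V 0 ω ^ 2) μ :=
    fun k l => hfactInt k l _ hψV (hVsq 0)
  have hE1 : ∀ k l : Fin m, (∫ ω, Pm ω k 0 * Pm ω l 0 * U 0 ω ^ 2 ∂μ)
      = (∫ ω, Pm ω k 0 * Pm ω l 0 ∂μ) * ∫ ω, U 0 ω ^ 2 ∂μ := fun k l => hfact k l _ hψU
  have hE2 : ∀ k l : Fin m, (∫ ω, Pm ω k 0 * Pm ω l 0 * (U 0 ω * V 0 ω) ∂μ)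
      = (∫ ω, Pm ω k 0 * Pm ω l 0 ∂μ) * ∫ ω, U 0 ω * V 0 ω ∂μ := fun k l => hfact k l _ hψUV
  have hE3 : ∀ k l : Fin m, (∫ ω, Pm ω k 0 * Pm ω l 0 * V 0 ω ^ 2 ∂μ)
      = (∫ ω, Pm ω k 0 * Pm ω l 0 ∂μ) * ∫ ω, V 0 ω ^ 2 ∂μ := fun k l => hfact k l _ hψV
  -- the inner integral
  have hinner : ∀ ω : Ω,
      (∫ ω', (∑ k, (U 0 ω' * Pm ω' k 0 * Pm ω k i * V i ω
            + U i ω * Pm ω k i * Pm ω' k 0 * V 0 ω'))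
          * (∑ k, (U 0 ω' * Pm ω' k 0 * Pm ω k j * V j ω
            + U j ω * Pm ω k j * Pm ω' k 0 * V 0 ω')) ∂μ)
        = 1 / (m:ℝ) * ((∑ k, Pm ω k i * Pm ω k j) *
            ((∫ ω'', U 0 ω'' ^ 2 ∂μ) * (V i ω * V j ω)
              + (∫ ω'', U 0 ω'' * V 0 ω'' ∂μ) * (V i ω * U j ω + U i ω * V j ω)
              + (∫ ω'', V 0 ω'' ^ 2 ∂μ) * (U i ω * U j ω))) := by
    intro ω
    refine (my_inner_eval (fun k ω' => Pm ω' k 0) (U 0) (V 0)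
        (fun k => Pm ω k i) (fun k => Pm ω k j) (U i ω) (V i ω) (U j ω) (V j ω)
        (∫ ω'', U 0 ω'' ^ 2 ∂μ) (∫ ω'', V 0 ω'' ^ 2 ∂μ) (∫ ω'', U 0 ω'' * V 0 ω'' ∂μ)
        hI1 hI2 hI3 hE1 hE2 hE3).trans ?_
    show (∑ k : Fin m, ∑ l : Fin m, (∫ ω', Pm ω' k 0 * Pm ω' l 0 ∂μ) *
        ((∫ ω'', U 0 ω'' ^ 2 ∂μ) * (Pm ω k i * V i ω * (Pm ω l j * V j ω))
          + (∫ ω'', U 0 ω'' * V 0 ω'' ∂μ) *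
              (Pm ω k i * V i ω * (U j ω * Pm ω l j) + U i ω * Pm ω k i * (Pm ω l j * V j ω))
          + (∫ ω'', V 0 ω'' ^ 2 ∂μ) * (U i ω * Pm ω k i * (U j ω * Pm ω l j))))
      = _
    have hcol : ∀ k : Fin m, (∑ l : Fin m, (∫ ω', Pm ω' k 0 * Pm ω' l 0 ∂μ) *
        ((∫ ω'', U 0 ω'' ^ 2 ∂μ) * (Pm ω k i * V i ω * (Pm ω l j * V j ω))
          + (∫ ω'', U 0 ω'' * V 0 ω'' ∂μ) *
              (Pm ω k i * V i ω * (U j ω * Pm ω l j) + U i ω * Pm ω k i * (Pm ω l j * V j ω))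
          + (∫ ω'', V 0 ω'' ^ 2 ∂μ) * (U i ω * Pm ω k i * (U j ω * Pm ω l j))))
        = 1 / (m:ℝ) *
        ((∫ ω'', U 0 ω'' ^ 2 ∂μ) * (Pm ω k i * V i ω * (Pm ω k j * V j ω))
          + (∫ ω'', U 0 ω'' * V 0 ω'' ∂μ) *
              (Pm ω k i * V i ω * (U j ω * Pm ω k j) + U i ω * Pm ω k i * (Pm ω k j * V j ω))
          + (∫ ω'', V 0 ω'' ^ 2 ∂μ) * (U i ω * Pm ω k i * (U j ω * Pm ω k j))) := by
      intro k
      rw [Finset.sum_eq_single k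
        (fun l _ hlk => by rw [hs k l (Ne.symm hlk), zero_mul])
        (fun hk => absurd (Finset.mem_univ k) hk), hsdiag k]
    rw [Finset.sum_congr rfl fun k _ => hcol k, ← Finset.mul_sum]
    congr 1
    rw [Finset.sum_mul]
    exact Finset.sum_congr rfl fun k _ => by ring
  simp only [hinner]
  -- split off the constant and factor by independence
  rw [integral_congr_ae
      (f := fun ω => (1 / (m:ℝ) * ((∑ k, Pm ω k i * Pm ω k j) *
        ((∫ ω'', U 0 ω'' ^ 2 ∂μ) * (V i ω * V j ω)
          + (∫ ω'', U 0 ω'' * V 0 ω'' ∂μ) * (V i ω * U j ω + U i ω * V j ω)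
          + (∫ ω'', V 0 ω'' ^ 2 ∂μ) * (U i ω * U j ω)))) ^ 2)
      (g := fun ω => (1 / (m:ℝ)) ^ 2 * ((∑ k, Pm ω k i * Pm ω k j) ^ 2 *
        ((∫ ω'', U 0 ω'' ^ 2 ∂μ) * (V i ω * V j ω)
          + (∫ ω'', U 0 ω'' * V 0 ω'' ∂μ) * (V i ω * U j ω + U i ω * V j ω)
          + (∫ ω'', V 0 ω'' ^ 2 ∂μ) * (U i ω * U j ω)) ^ 2))
      (Filter.Eventually.of_forall fun ω => by ring), integral_const_mul]
  have measT2 : Measurable fun ω => (∑ k, Pm ω k i * Pm ω k j) ^ 2 :=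
    (Finset.measurable_sum Finset.univ fun k _ => (hPmeas k i).mul (hPmeas k j)).pow_const 2
  have measQ2 : Measurable fun ω =>
      ((∫ ω'', U 0 ω'' ^ 2 ∂μ) * (V i ω * V j ω)
        + (∫ ω'', U 0 ω'' * V 0 ω'' ∂μ) * (V i ω * U j ω + U i ω * V j ω)
        + (∫ ω'', V 0 ω'' ^ 2 ∂μ) * (U i ω * U j ω)) ^ 2 :=
    (((measurable_const.mul ((hV_meas i).mul (hV_meas j))).add
      (measurable_const.mul (((hV_meas i).mul (hU_meas j)).add ((hU_meas i).mul (hV_meas j))))).add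
      (measurable_const.mul ((hU_meas i).mul (hU_meas j)))).pow_const 2
  have hTQind : IndepFun (fun ω => (∑ k, Pm ω k i * Pm ω k j) ^ 2)
      (fun ω => ((∫ ω'', U 0 ω'' ^ 2 ∂μ) * (V i ω * V j ω)
        + (∫ ω'', U 0 ω'' * V 0 ω'' ∂μ) * (V i ω * U j ω + U i ω * V j ω)
        + (∫ ω'', V 0 ω'' ^ 2 ∂μ) * (U i ω * U j ω)) ^ 2) μ := by
    have hφ : Measurable fun M : Fin m → Fin n → ℝ => (∑ k, M k i * M k j) ^ 2 :=
      (Finset.measurable_sum Finset.univ fun k _ =>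
        ((measurable_pi_apply i).comp (measurable_pi_apply k)).mul
          ((measurable_pi_apply j).comp (measurable_pi_apply k))).pow_const 2
    have hψ : Measurable fun w : Fin n → ℝ × ℝ =>
        ((∫ ω'', U 0 ω'' ^ 2 ∂μ) * ((w i).2 * (w j).2)
          + (∫ ω'', U 0 ω'' * V 0 ω'' ∂μ) * ((w i).2 * (w j).1 + (w i).1 * (w j).2)
          + (∫ ω'', V 0 ω'' ^ 2 ∂μ) * ((w i).1 * (w j).1)) ^ 2 :=
      (((measurable_const.mul (((measurable_pi_apply i).snd).mul
          ((measurable_pi_apply j).snd))).add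
        (measurable_const.mul ((((measurable_pi_apply i).snd).mul
          ((measurable_pi_apply j).fst)).add (((measurable_pi_apply i).fst).mul
          ((measurable_pi_apply j).snd))))).add
        (measurable_const.mul (((measurable_pi_apply i).fst).mul
          ((measurable_pi_apply j).fst)))).pow_const 2
    exact hPUV.comp hφ hψ
  have hmul : (∫ ω, (∑ k, Pm ω k i * Pm ω k j) ^ 2 *
      ((∫ ω'', U 0 ω'' ^ 2 ∂μ) * (V i ω * V j ω)
        + (∫ ω'', U 0 ω'' * V 0 ω'' ∂μ) * (V i ω * U j ω + U i ω * V j ω)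
        + (∫ ω'', V 0 ω'' ^ 2 ∂μ) * (U i ω * U j ω)) ^ 2 ∂μ)
      = (∫ ω, (∑ k, Pm ω k i * Pm ω k j) ^ 2 ∂μ) *
        ∫ ω, ((∫ ω'', U 0 ω'' ^ 2 ∂μ) * (V i ω * V j ω)
          + (∫ ω'', U 0 ω'' * V 0 ω'' ∂μ) * (V i ω * U j ω + U i ω * V j ω)
          + (∫ ω'', V 0 ω'' ^ 2 ∂μ) * (U i ω * U j ω)) ^ 2 ∂μ :=
    hTQind.integral_fun_mul_eq_mul_integral measT2.aestronglyMeasurable measQ2.aestronglyMeasurable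
  rw [hmul]
  -- E[T²] = 1/m
  have hT2 : (∫ ω, (∑ k, Pm ω k i * Pm ω k j) ^ 2 ∂μ) = 1 / (m:ℝ) := by
    have e2 : (fun ω => (∑ k, Pm ω k i * Pm ω k j) ^ 2)
        = fun ω => ∑ k : Fin m, ∑ l : Fin m, (Pm ω k i * Pm ω k j) * (Pm ω l i * Pm ω l j) := by
      funext ω; rw [sq, Finset.sum_mul_sum]
    rw [e2, integral_finset_sum _ fun k _ => integrable_finset_sum _ fun l _ => h4Int k l]
    have hterm : ∀ k l : Fin m, (∫ ω, (Pm ω k i * Pm ω k j) * (Pm ω l i * Pm ω l j) ∂μ)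
        = if k = l then 1 / (m:ℝ) ^ 2 else 0 := by
      intro k l
      by_cases hkl : k = l
      · subst hkl
        rw [if_pos rfl, integral_congr_ae (g := fun ω => Pm ω k i ^ 2 * Pm ω k j ^ 2)
          (Filter.Eventually.of_forall fun ω => by ring)]
        exact hP4 k i j hij
      · rw [if_neg hkl, integral_congr_ae
          (g := fun ω => Pm ω k i * Pm ω k j * Pm ω l i * Pm ω l j)
          (Filter.Eventually.of_forall fun ω => by ring)]
        exact hP4c k l i j i j hkl hij hij
    rw [Finset.sum_congr rfl fun k _ => (integral_finset_sum _ fun l _ => h4Int k l),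
        Finset.sum_congr rfl fun k _ => Finset.sum_congr rfl fun l _ => hterm k l]
    simp only [Finset.sum_ite_eq, Finset.mem_univ, if_true]
    rw [Finset.sum_const, Finset.card_univ, Fintype.card_fin, nsmul_eq_mul]
    field_simp
  rw [hT2]
  -- bound E[Q²]
  have hpair : ∀ (φ1 φ2 : ℝ × ℝ → ℝ), Measurable φ1 → Measurable φ2 →
      (∫ ω, φ1 (U i ω, V i ω) * φ2 (U j ω, V j ω) ∂μ)
        = (∫ ω, φ1 (U 0 ω, V 0 ω) ∂μ) * ∫ ω, φ2 (U 0 ω, V 0 ω) ∂μ := by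
    intro φ1 φ2 h1 h2
    have hind : IndepFun (fun ω => φ1 (U i ω, V i ω)) (fun ω => φ2 (U j ω, V j ω)) μ :=
      (hUV_indep.indepFun hij).comp h1 h2
    have e1 : (∫ ω, φ1 (U i ω, V i ω) ∂μ) = ∫ ω, φ1 (U 0 ω, V 0 ω) ∂μ :=
      ((hUV_ident i).comp h1).integral_eq
    have e2 : (∫ ω, φ2 (U j ω, V j ω) ∂μ) = ∫ ω, φ2 (U 0 ω, V 0 ω) ∂μ :=
      ((hUV_ident j).comp h2).integral_eq
    rw [hind.integral_fun_mul_eq_mul_integral (h1.comp ((hU_meas i).prodMk (hV_meas i))).aestronglyMeasurable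
      (h2.comp ((hU_meas j).prodMk (hV_meas j))).aestronglyMeasurable, e1, e2]
  have hVV : (∫ ω, V i ω ^ 2 * V j ω ^ 2 ∂μ) = (∫ ω, V 0 ω ^ 2 ∂μ) * ∫ ω, V 0 ω ^ 2 ∂μ :=
    hpair (fun p => p.2 ^ 2) (fun p => p.2 ^ 2) (measurable_snd.pow_const 2)
      (measurable_snd.pow_const 2)
  have hVU : (∫ ω, V i ω ^ 2 * U j ω ^ 2 ∂μ) = (∫ ω, V 0 ω ^ 2 ∂μ) * ∫ ω, U 0 ω ^ 2 ∂μ :=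
    hpair (fun p => p.2 ^ 2) (fun p => p.1 ^ 2) (measurable_snd.pow_const 2)
      (measurable_fst.pow_const 2)
  have hUVv : (∫ ω, U i ω ^ 2 * V j ω ^ 2 ∂μ) = (∫ ω, U 0 ω ^ 2 ∂μ) * ∫ ω, V 0 ω ^ 2 ∂μ :=
    hpair (fun p => p.1 ^ 2) (fun p => p.2 ^ 2) (measurable_fst.pow_const 2)
      (measurable_snd.pow_const 2)
  have hUU : (∫ ω, U i ω ^ 2 * U j ω ^ 2 ∂μ) = (∫ ω, U 0 ω ^ 2 ∂μ) * ∫ ω, U 0 ω ^ 2 ∂μ :=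
    hpair (fun p => p.1 ^ 2) (fun p => p.1 ^ 2) (measurable_fst.pow_const 2)
      (measurable_fst.pow_const 2)
  have hsq4 : ∀ (f g : Ω → ℝ), Measurable f → Measurable g →
      Integrable (fun ω => f ω ^ 4) μ → Integrable (fun ω => g ω ^ 4) μ →
      Integrable (fun ω => f ω ^ 2 * g ω ^ 2) μ := by
    intro f g hf hg hf4 hg4
    exact my_integrable_mul_of_sq (hf.pow_const 2).aestronglyMeasurable
      (hg.pow_const 2).aestronglyMeasurable
      (hf4.congr (Filter.Eventually.of_forall fun ω => by ring))
      (hg4.congr (Filter.Eventually.of_forall fun ω => by ring))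
  have hiVV : Integrable (fun ω => V i ω ^ 2 * V j ω ^ 2) μ :=
    hsq4 (V i) (V j) (hV_meas i) (hV_meas j) (hV4i i) (hV4i j)
  have hiVU : Integrable (fun ω => V i ω ^ 2 * U j ω ^ 2) μ :=
    hsq4 (V i) (U j) (hV_meas i) (hU_meas j) (hV4i i) (hU4i j)
  have hiUV : Integrable (fun ω => U i ω ^ 2 * V j ω ^ 2) μ :=
    hsq4 (U i) (V j) (hU_meas i) (hV_meas j) (hU4i i) (hV4i j)
  have hiUU : Integrable (fun ω => U i ω ^ 2 * U j ω ^ 2) μ :=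
    hsq4 (U i) (U j) (hU_meas i) (hU_meas j) (hU4i i) (hU4i j)
  have hQle : (∫ ω, ((∫ ω'', U 0 ω'' ^ 2 ∂μ) * (V i ω * V j ω)
        + (∫ ω'', U 0 ω'' * V 0 ω'' ∂μ) * (V i ω * U j ω + U i ω * V j ω)
        + (∫ ω'', V 0 ω'' ^ 2 ∂μ) * (U i ω * U j ω)) ^ 2 ∂μ)
      ≤ 3 * (∫ ω, U 0 ω ^ 2 ∂μ) ^ 2 * ((∫ ω, V 0 ω ^ 2 ∂μ) * ∫ ω, V 0 ω ^ 2 ∂μ)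
        + 6 * (∫ ω, U 0 ω * V 0 ω ∂μ) ^ 2 * ((∫ ω, V 0 ω ^ 2 ∂μ) * ∫ ω, U 0 ω ^ 2 ∂μ)
        + 6 * (∫ ω, U 0 ω * V 0 ω ∂μ) ^ 2 * ((∫ ω, U 0 ω ^ 2 ∂μ) * ∫ ω, V 0 ω ^ 2 ∂μ)
        + 3 * (∫ ω, V 0 ω ^ 2 ∂μ) ^ 2 * ((∫ ω, U 0 ω ^ 2 ∂μ) * ∫ ω, U 0 ω ^ 2 ∂μ) := by
    have hA1 : Integrable (fun ω =>
        3 * (∫ ω'', U 0 ω'' ^ 2 ∂μ) ^ 2 * (V i ω ^ 2 * V j ω ^ 2)) μ := hiVV.const_mul _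
    have hA2 : Integrable (fun ω =>
        6 * (∫ ω'', U 0 ω'' * V 0 ω'' ∂μ) ^ 2 * (V i ω ^ 2 * U j ω ^ 2)) μ := hiVU.const_mul _
    have hA3 : Integrable (fun ω =>
        6 * (∫ ω'', U 0 ω'' * V 0 ω'' ∂μ) ^ 2 * (U i ω ^ 2 * V j ω ^ 2)) μ := hiUV.const_mul _
    have hA4 : Integrable (fun ω =>
        3 * (∫ ω'', V 0 ω'' ^ 2 ∂μ) ^ 2 * (U i ω ^ 2 * U j ω ^ 2)) μ := hiUU.const_mul _
    have hA12 : Integrable (fun ω =>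
        3 * (∫ ω'', U 0 ω'' ^ 2 ∂μ) ^ 2 * (V i ω ^ 2 * V j ω ^ 2)
        + 6 * (∫ ω'', U 0 ω'' * V 0 ω'' ∂μ) ^ 2 * (V i ω ^ 2 * U j ω ^ 2)) μ := hA1.add hA2
    have hA123 : Integrable (fun ω =>
        3 * (∫ ω'', U 0 ω'' ^ 2 ∂μ) ^ 2 * (V i ω ^ 2 * V j ω ^ 2)
        + 6 * (∫ ω'', U 0 ω'' * V 0 ω'' ∂μ) ^ 2 * (V i ω ^ 2 * U j ω ^ 2)
        + 6 * (∫ ω'', U 0 ω'' * V 0 ω'' ∂μ) ^ 2 * (U i ω ^ 2 * V j ω ^ 2)) μ := hA12.add hA3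
    have hA : Integrable (fun ω =>
        3 * (∫ ω'', U 0 ω'' ^ 2 ∂μ) ^ 2 * (V i ω ^ 2 * V j ω ^ 2)
        + 6 * (∫ ω'', U 0 ω'' * V 0 ω'' ∂μ) ^ 2 * (V i ω ^ 2 * U j ω ^ 2)
        + 6 * (∫ ω'', U 0 ω'' * V 0 ω'' ∂μ) ^ 2 * (U i ω ^ 2 * V j ω ^ 2)
        + 3 * (∫ ω'', V 0 ω'' ^ 2 ∂μ) ^ 2 * (U i ω ^ 2 * U j ω ^ 2)) μ := hA123.add hA4
    have hmono : (∫ ω, ((∫ ω'', U 0 ω'' ^ 2 ∂μ) * (V i ω * V j ω)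
          + (∫ ω'', U 0 ω'' * V 0 ω'' ∂μ) * (V i ω * U j ω + U i ω * V j ω)
          + (∫ ω'', V 0 ω'' ^ 2 ∂μ) * (U i ω * U j ω)) ^ 2 ∂μ)
        ≤ ∫ ω, (3 * (∫ ω'', U 0 ω'' ^ 2 ∂μ) ^ 2 * (V i ω ^ 2 * V j ω ^ 2)
          + 6 * (∫ ω'', U 0 ω'' * V 0 ω'' ∂μ) ^ 2 * (V i ω ^ 2 * U j ω ^ 2)
          + 6 * (∫ ω'', U 0 ω'' * V 0 ω'' ∂μ) ^ 2 * (U i ω ^ 2 * V j ω ^ 2)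
          + 3 * (∫ ω'', V 0 ω'' ^ 2 ∂μ) ^ 2 * (U i ω ^ 2 * U j ω ^ 2)) ∂μ := by
      refine integral_mono_of_nonneg (Filter.Eventually.of_forall fun ω => sq_nonneg _) hA
        (Filter.Eventually.of_forall fun ω => ?_)
      refine le_trans (my_quad_bound (∫ ω'', U 0 ω'' ^ 2 ∂μ) (∫ ω'', V 0 ω'' ^ 2 ∂μ)
        (∫ ω'', U 0 ω'' * V 0 ω'' ∂μ) (V i ω * V j ω) (V i ω * U j ω) (U i ω * V j ω)
        (U i ω * U j ω)) (le_of_eq (by ring))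
    refine hmono.trans (le_of_eq ?_)
    rw [integral_add hA123 hA4, integral_add hA12 hA3, integral_add hA1 hA2,
        integral_const_mul, integral_const_mul, integral_const_mul, integral_const_mul,
        hVV, hVU, hUVv, hUU]
  have hQnn : (0:ℝ) ≤ ∫ ω, ((∫ ω'', U 0 ω'' ^ 2 ∂μ) * (V i ω * V j ω)
      + (∫ ω'', U 0 ω'' * V 0 ω'' ∂μ) * (V i ω * U j ω + U i ω * V j ω)
      + (∫ ω'', V 0 ω'' ^ 2 ∂μ) * (U i ω * U j ω)) ^ 2 ∂μ :=
    integral_nonneg fun ω => sq_nonneg _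
  calc (1 / (m:ℝ)) ^ 2 * (1 / (m:ℝ) *
      ∫ ω, ((∫ ω'', U 0 ω'' ^ 2 ∂μ) * (V i ω * V j ω)
        + (∫ ω'', U 0 ω'' * V 0 ω'' ∂μ) * (V i ω * U j ω + U i ω * V j ω)
        + (∫ ω'', V 0 ω'' ^ 2 ∂μ) * (U i ω * U j ω)) ^ 2 ∂μ)
      = (∫ ω, ((∫ ω'', U 0 ω'' ^ 2 ∂μ) * (V i ω * V j ω)
        + (∫ ω'', U 0 ω'' * V 0 ω'' ∂μ) * (V i ω * U j ω + U i ω * V j ω)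
        + (∫ ω'', V 0 ω'' ^ 2 ∂μ) * (U i ω * U j ω)) ^ 2 ∂μ) * (1 / (m:ℝ)) ^ 3 := by
        ring
    _ ≤ (3 * (∫ ω, U 0 ω ^ 2 ∂μ) ^ 2 * ((∫ ω, V 0 ω ^ 2 ∂μ) * ∫ ω, V 0 ω ^ 2 ∂μ)
        + 6 * (∫ ω, U 0 ω * V 0 ω ∂μ) ^ 2 * ((∫ ω, V 0 ω ^ 2 ∂μ) * ∫ ω, U 0 ω ^ 2 ∂μ)
        + 6 * (∫ ω, U 0 ω * V 0 ω ∂μ) ^ 2 * ((∫ ω, U 0 ω ^ 2 ∂μ) * ∫ ω, V 0 ω ^ 2 ∂μ)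
        + 3 * (∫ ω, V 0 ω ^ 2 ∂μ) ^ 2 * ((∫ ω, U 0 ω ^ 2 ∂μ) * ∫ ω, U 0 ω ^ 2 ∂μ))
          * (1 / (m:ℝ)) ^ 3 :=
        mul_le_mul_of_nonneg_right hQle (by positivity)
    _ = (3 * (∫ ω, U 0 ω ^ 2 ∂μ) ^ 2 * ((∫ ω, V 0 ω ^ 2 ∂μ) * ∫ ω, V 0 ω ^ 2 ∂μ)
        + 6 * (∫ ω, U 0 ω * V 0 ω ∂μ) ^ 2 * ((∫ ω, V 0 ω ^ 2 ∂μ) * ∫ ω, U 0 ω ^ 2 ∂μ)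
        + 6 * (∫ ω, U 0 ω * V 0 ω ∂μ) ^ 2 * ((∫ ω, U 0 ω ^ 2 ∂μ) * ∫ ω, V 0 ω ^ 2 ∂μ)
        + 3 * (∫ ω, V 0 ω ^ 2 ∂μ) ^ 2 * ((∫ ω, U 0 ω ^ 2 ∂μ) * ∫ ω, U 0 ω ^ 2 ∂μ))
          / (m:ℝ) ^ 3 := by
        rw [div_pow, one_pow, mul_one_div]
end

section
/- Let Ã₁ = U_ZᵀΠᵀΠU_X, Â₁ = U_ZᵀU_X, Ã₂ = (U_ZᵀΠᵀΠU_Z)^{−1}, Â₂ = I. If ‖U_ZᵀΠᵀΠU_Z − I_q‖₂ ≤ ε₁ and ‖Ã₁ − Â₁‖₂ ≤ ε₂ with ε₁, ε₂ ∈ (0,1/2), then ‖Ã₁ᵀÃ₂Ã₁ − Â₁ᵀÂ₁‖₂ ≤ (ε₁ + ε₂(ε₂+2))/(1 − ε₁). -/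
open Matrix

/-- Euclidean norm of a finitely supported real vector. -/
noncomputable def euclNorm {ι : Type*} [Fintype ι] (v : ι → ℝ) : ℝ :=
  Real.sqrt (∑ i, v i ^ 2)

/-- Spectral (ℓ²-operator) norm of a real matrix. -/
noncomputable def specNorm {ι κ : Type*} [Fintype ι] [Fintype κ]
    (A : Matrix ι κ ℝ) : ℝ :=
  sSup ((fun x => euclNorm (A *ᵥ x)) '' {x | euclNorm x = 1})

open Metric
open scoped Matrix.Norms.L2Operator

lemma euclNorm_eq_norm {κ : Type*} [Fintype κ] (v : κ → ℝ) :
    euclNorm v = ‖(WithLp.equiv 2 (κ → ℝ)).symm v‖ := by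
  rw [EuclideanSpace.norm_eq]; simp [euclNorm, sq_abs]


lemma sSup_sphere_opNorm {E F : Type*} [NormedAddCommGroup E] [NormedSpace ℝ E] [Nontrivial E]
    [NormedAddCommGroup F] [NormedSpace ℝ F] (f : E →L[ℝ] F) :
    sSup ((fun x => ‖f x‖) '' sphere 0 1) = ‖f‖ := by
  obtain ⟨z, hz⟩ := exists_norm_eq E zero_le_one
  have hzs : z ∈ sphere (0 : E) 1 := by simpa [mem_sphere_zero_iff_norm] using hz
  have hne : ((fun x => ‖f x‖) '' sphere 0 1).Nonempty := ⟨‖f z‖, z, hzs, rfl⟩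
  have hbdd : ∀ y ∈ (fun x => ‖f x‖) '' sphere 0 1, y ≤ ‖f‖ := by
    rintro - ⟨x, hx, rfl⟩
    exact f.unit_le_opNorm x (le_of_eq (mem_sphere_zero_iff_norm.1 hx))
  have hnn : (0:ℝ) ≤ sSup ((fun x => ‖f x‖) '' sphere 0 1) :=
    le_trans (norm_nonneg (f z)) (le_csSup ⟨‖f‖, hbdd⟩ ⟨z, hzs, rfl⟩)
  refine le_antisymm (csSup_le hne hbdd) (f.opNorm_le_bound hnn fun x => ?_)
  rcases eq_or_ne x 0 with rfl | hx
  · simp only [map_zero, norm_zero]; positivity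
  · have hxn : ‖x‖ ≠ 0 := norm_ne_zero_iff.2 hx
    have hu : (‖x‖⁻¹ • x) ∈ sphere (0 : E) 1 := by
      simp [mem_sphere_zero_iff_norm, norm_smul, abs_of_nonneg (norm_nonneg x),
        inv_mul_cancel₀ hxn]
    have h1 : ‖f (‖x‖⁻¹ • x)‖ ≤ sSup ((fun x => ‖f x‖) '' sphere 0 1) :=
      le_csSup ⟨‖f‖, hbdd⟩ ⟨_, hu, rfl⟩
    have h2 : ‖f (‖x‖⁻¹ • x)‖ = ‖x‖⁻¹ * ‖f x‖ := by
      rw [_root_.map_smul, norm_smul, norm_inv, Real.norm_eq_abs, abs_of_nonneg (norm_nonneg x)]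
    rw [h2] at h1
    calc ‖f x‖ = ‖x‖ * (‖x‖⁻¹ * ‖f x‖) := by field_simp
    _ ≤ ‖x‖ * sSup ((fun x => ‖f x‖) '' sphere 0 1) :=
        mul_le_mul_of_nonneg_left h1 (norm_nonneg x)
    _ = sSup ((fun x => ‖f x‖) '' sphere 0 1) * ‖x‖ := mul_comm _ _

lemma specNorm_eq_opNorm {ι κ : Type*} [Fintype ι] [Fintype κ] [DecidableEq κ] (A : Matrix ι κ ℝ) :
    specNorm A = ‖A‖ := by
  set f := (toEuclideanLin.trans LinearMap.toContinuousLinearMap) A with hf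
  have hnorm : ‖A‖ = ‖f‖ := Matrix.l2_opNorm_def A
  have himg : (fun x => euclNorm (A *ᵥ x)) '' {x | euclNorm x = 1}
      = (fun x : EuclideanSpace ℝ κ => ‖f x‖) '' sphere 0 1 := by
    ext y
    constructor
    · rintro ⟨x, hx, rfl⟩
      refine ⟨(WithLp.equiv 2 (κ → ℝ)).symm x, ?_, ?_⟩
      · rw [mem_sphere_zero_iff_norm, ← euclNorm_eq_norm]; exact hx
      · have : f ((WithLp.equiv 2 (κ → ℝ)).symm x)
            = (WithLp.equiv 2 (ι → ℝ)).symm (A *ᵥ x) := by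
          simp [hf, Matrix.toEuclideanLin_apply]
        show ‖f _‖ = euclNorm (A *ᵥ x)
        rw [this, ← euclNorm_eq_norm]
    · rintro ⟨x, hx, rfl⟩
      refine ⟨WithLp.equiv 2 (κ → ℝ) x, ?_, ?_⟩
      · show euclNorm _ = 1
        rw [euclNorm_eq_norm]
        simpa [mem_sphere_zero_iff_norm] using hx
      · have : f x = (WithLp.equiv 2 (ι → ℝ)).symm (A *ᵥ (WithLp.equiv 2 (κ → ℝ) x)) := by
          simp [hf, Matrix.toEuclideanLin_apply]
        show euclNorm (A *ᵥ _) = ‖f x‖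
        rw [euclNorm_eq_norm, ← this]
  rw [specNorm, himg, hnorm]
  cases isEmpty_or_nonempty κ with
  | inl h =>
    have hs : (sphere (0 : EuclideanSpace ℝ κ) 1) = ∅ := by
      ext x
      simp [mem_sphere_zero_iff_norm, Subsingleton.elim x 0]
    have hf0 : f = 0 := by ext x; simp [Subsingleton.elim x 0]
    rw [hs, Set.image_empty, Real.sSup_empty, hf0, norm_zero]
  | inr h =>
    exact sSup_sphere_opNorm f

lemma real_conjTranspose_eq {m' n' : Type*} (A : Matrix m' n' ℝ) : Aᴴ = Aᵀ := by
  ext i j; simp [Matrix.conjTranspose_apply]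

lemma l2_opNorm_transpose {m' n' : Type*} [Fintype m'] [Fintype n'] [DecidableEq m']
    [DecidableEq n'] (A : Matrix m' n' ℝ) : ‖Aᵀ‖ = ‖A‖ := by
  rw [← real_conjTranspose_eq, Matrix.l2_opNorm_conjTranspose]

lemma l2_opNorm_one_le (n' : Type*) [Fintype n'] [DecidableEq n'] :
    ‖(1 : Matrix n' n' ℝ)‖ ≤ 1 := by
  rw [Matrix.cstar_norm_def, _root_.map_one]
  exact ContinuousLinearMap.norm_id_le

lemma l2_opNorm_orthonormal_le {m' n' : Type*} [Fintype m'] [Fintype n'] [DecidableEq m']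
    [DecidableEq n'] (A : Matrix m' n' ℝ) (h : Aᵀ * A = 1) : ‖A‖ ≤ 1 := by
  have h2 := Matrix.l2_opNorm_conjTranspose_mul_self A
  rw [real_conjTranspose_eq, h] at h2
  have := l2_opNorm_one_le n'
  nlinarith [norm_nonneg A]

/-- **Perturbation bound for `Ã₁ᵀÃ₂Ã₁`.**
Let `Ã₁ = U_ZᵀΠᵀΠU_X`, `Â₁ = U_ZᵀU_X`, `Ã₂ = (U_ZᵀΠᵀΠU_Z)⁻¹`, `Â₂ = I`.
If `‖U_ZᵀΠᵀΠU_Z − I‖₂ ≤ ε₁` and `‖Ã₁ − Â₁‖₂ ≤ ε₂` with `ε₁, ε₂ ∈ (0,1/2)`,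
then `‖Ã₁ᵀÃ₂Ã₁ − Â₁ᵀÂ₁‖₂ ≤ (ε₁ + ε₂(ε₂+2))/(1−ε₁)`. -/
theorem sketched_A_perturbation_bound
    (n p q m : ℕ)
    (UX : Matrix (Fin n) (Fin p) ℝ) (UZ : Matrix (Fin n) (Fin q) ℝ)
    (hUX : UXᵀ * UX = 1) (hUZ : UZᵀ * UZ = 1)
    (Pm : Matrix (Fin m) (Fin n) ℝ)
    (ε₁ ε₂ : ℝ) (hε₁ : ε₁ ∈ Set.Ioo (0 : ℝ) (1 / 2))
    (hε₂ : ε₂ ∈ Set.Ioo (0 : ℝ) (1 / 2))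
    (h1 : specNorm (UZᵀ * Pmᵀ * Pm * UZ - 1) ≤ ε₁)
    (h2 : specNorm (UZᵀ * Pmᵀ * Pm * UX - UZᵀ * UX) ≤ ε₂) :
    specNorm ((UZᵀ * Pmᵀ * Pm * UX)ᵀ * (UZᵀ * Pmᵀ * Pm * UZ)⁻¹ *
        (UZᵀ * Pmᵀ * Pm * UX) - (UZᵀ * UX)ᵀ * (UZᵀ * UX))
      ≤ (ε₁ + ε₂ * (ε₂ + 2)) / (1 - ε₁) := by
  obtain ⟨hε₁0, hε₁h⟩ := hε₁
  obtain ⟨hε₂0, hε₂h⟩ := hε₂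
  rw [specNorm_eq_opNorm] at h1 h2 ⊢
  haveI : CompleteSpace (Matrix (Fin q) (Fin q) ℝ) := FiniteDimensional.complete ℝ _
  set M : Matrix (Fin q) (Fin q) ℝ := UZᵀ * Pmᵀ * Pm * UZ with hM
  set A1t : Matrix (Fin q) (Fin p) ℝ := UZᵀ * Pmᵀ * Pm * UX with hA1t
  set A1h : Matrix (Fin q) (Fin p) ℝ := UZᵀ * UX with hA1h
  set E : Matrix (Fin q) (Fin q) ℝ := M - 1 with hE
  set D : Matrix (Fin q) (Fin p) ℝ := A1t - A1h with hD
  have hE1 : ‖-E‖ < 1 := by rw [norm_neg]; linarith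
  set u : (Matrix (Fin q) (Fin q) ℝ)ˣ := Units.oneSub (-E) hE1 with hu
  have huv : (u : Matrix (Fin q) (Fin q) ℝ) = M := by
    rw [hu, Units.val_oneSub, sub_neg_eq_add, hE]; abel
  set N : Matrix (Fin q) (Fin q) ℝ := (↑u⁻¹ : Matrix (Fin q) (Fin q) ℝ) with hN
  have hinv : M⁻¹ = N := by rw [hN, Matrix.coe_units_inv, huv]
  have hNM : N * M = 1 := by rw [hN, ← huv]; exact_mod_cast u.inv_mul
  have hone : ‖(1 : Matrix (Fin q) (Fin q) ℝ)‖ ≤ 1 := l2_opNorm_one_le _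
  have hN1 : N - 1 = N * (-E) := by
    have : N * (1 - M) = N - 1 := by rw [Matrix.mul_sub, Matrix.mul_one, hNM]
    rw [← this, neg_sub]
  have hEn : (0:ℝ) ≤ ‖E‖ := norm_nonneg _
  have hNn : (0:ℝ) ≤ ‖N‖ := norm_nonneg _
  have hNE : ‖N * (-E)‖ ≤ ‖N‖ * ε₁ := by
    refine (Matrix.l2_opNorm_mul N (-E)).trans ?_
    rw [norm_neg]
    exact mul_le_mul_of_nonneg_left h1 hNn
  have hNle : ‖N‖ ≤ 1 / (1 - ε₁) := by
    have h3 : ‖N‖ ≤ ‖N - 1‖ + ‖(1 : Matrix (Fin q) (Fin q) ℝ)‖ := by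
      calc ‖N‖ = ‖N - 1 + 1‖ := by rw [sub_add_cancel]
      _ ≤ _ := norm_add_le _ _
    rw [hN1] at h3
    rw [le_div_iff₀ (by linarith)]
    nlinarith
  have hN1le : ‖N - 1‖ ≤ ε₁ / (1 - ε₁) := by
    rw [hN1]
    refine hNE.trans ?_
    have h4 := mul_le_mul_of_nonneg_right hNle hε₁0.le
    refine h4.trans_eq ?_
    field_simp
  have hUXle : ‖UX‖ ≤ 1 := l2_opNorm_orthonormal_le UX hUX
  have hUZle : ‖UZ‖ ≤ 1 := l2_opNorm_orthonormal_le UZ hUZ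
  have hA1hle : ‖A1h‖ ≤ 1 := by
    refine (Matrix.l2_opNorm_mul UZᵀ UX).trans ?_
    rw [l2_opNorm_transpose]
    nlinarith [norm_nonneg UZ, norm_nonneg UX]
  have hA1tle : ‖A1t‖ ≤ 1 + ε₂ := by
    calc ‖A1t‖ = ‖A1h + D‖ := by rw [hD]; congr 1; abel
    _ ≤ ‖A1h‖ + ‖D‖ := norm_add_le _ _
    _ ≤ 1 + ε₂ := add_le_add hA1hle h2
  have hkey : A1tᵀ * M⁻¹ * A1t - A1hᵀ * A1h
      = Dᵀ * (N * A1t) + A1hᵀ * (N * D) + A1hᵀ * ((N - 1) * A1h) := by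
    rw [hinv, hD]
    simp only [Matrix.transpose_sub, Matrix.sub_mul, Matrix.mul_sub, Matrix.one_mul,
      Matrix.mul_one, Matrix.mul_assoc]
    abel
  rw [hkey]
  have b1 : ‖Dᵀ * (N * A1t)‖ ≤ ε₂ * ((1 / (1 - ε₁)) * (1 + ε₂)) := by
    refine (Matrix.l2_opNorm_mul _ _).trans ?_
    rw [l2_opNorm_transpose]
    have : ‖N * A1t‖ ≤ (1 / (1 - ε₁)) * (1 + ε₂) :=
      (Matrix.l2_opNorm_mul _ _).trans
        (mul_le_mul hNle hA1tle (norm_nonneg _) (le_of_lt (div_pos one_pos (by linarith))))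
    exact mul_le_mul h2 this (norm_nonneg _) hε₂0.le
  have b2 : ‖A1hᵀ * (N * D)‖ ≤ 1 * ((1 / (1 - ε₁)) * ε₂) := by
    refine (Matrix.l2_opNorm_mul _ _).trans ?_
    rw [l2_opNorm_transpose]
    have : ‖N * D‖ ≤ (1 / (1 - ε₁)) * ε₂ :=
      (Matrix.l2_opNorm_mul _ _).trans
        (mul_le_mul hNle h2 (norm_nonneg _) (le_of_lt (div_pos one_pos (by linarith))))
    exact mul_le_mul hA1hle this (norm_nonneg _) zero_le_one
  have b3 : ‖A1hᵀ * ((N - 1) * A1h)‖ ≤ 1 * ((ε₁ / (1 - ε₁)) * 1) := by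
    refine (Matrix.l2_opNorm_mul _ _).trans ?_
    rw [l2_opNorm_transpose]
    have : ‖(N - 1) * A1h‖ ≤ (ε₁ / (1 - ε₁)) * 1 :=
      (Matrix.l2_opNorm_mul _ _).trans
        (mul_le_mul hN1le hA1hle (norm_nonneg _) (le_of_lt (div_pos hε₁0 (by linarith))))
    exact mul_le_mul hA1hle this (norm_nonneg _) zero_le_one
  calc ‖Dᵀ * (N * A1t) + A1hᵀ * (N * D) + A1hᵀ * ((N - 1) * A1h)‖
      ≤ ‖Dᵀ * (N * A1t)‖ + ‖A1hᵀ * (N * D)‖ + ‖A1hᵀ * ((N - 1) * A1h)‖ := norm_add₃_le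
  _ ≤ ε₂ * ((1 / (1 - ε₁)) * (1 + ε₂)) + 1 * ((1 / (1 - ε₁)) * ε₂)
        + 1 * ((ε₁ / (1 - ε₁)) * 1) := by linarith
  _ = (ε₁ + ε₂ * (ε₂ + 2)) / (1 - ε₁) := by field_simp; ring
end
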